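/- Let Q be a finite acyclic quiver, γ₁ and γ₂ dimension vectors, and f₁ ∈ ℋ_{γ₁}, f₂ ∈ ℋ_{γ₂}. Then the Kontsevich–Soibelman localization sum Σ_{(S₁,…,S_n)} f₁((ω_{i,j})_{j∈S_i}) · f₂((ω_{i,j})_{j∈S̄_i}) · (∏_{a∈Q₁} ∏_{j'∈S̄_{h(a)}} ∏_{j∈S_{t(a)}} (ω_{h(a),j'} − ω_{t(a),j})) / (∏_{i∈Q₀} ∏_{j'∈S̄_i} ∏_{j∈S_i} (ω_{i,j'} − ω_{i,j})) — a priori an element of the field of rational functions in the variables ω_{i,j} (i ∈ Q₀, 1 ≤ j ≤ γ₁(i)+γ₂(i)) — is a polynomial, and for each vertex i it is symmetric in the variables ω_{i,1},…,ω_{i,γ₁(i)+γ₂(i)}; hence f₁ * f₂ ∈ ℋ_{γ₁+γ₂}. -/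

import Mathlib

open MvPolynomial
open scoped Classical

/-- A finite quiver with vertex set `Fin n`: a finite type of arrows together with
head and tail maps. -/
structure FinQuiver (n : ℕ) where
  Arr : Type
  [fintypeArr : Fintype Arr]
  hd : Arr → Fin n
  tl : Arr → Fin n

attribute [instance] FinQuiver.fintypeArr

variable {n : ℕ}

/-- `Q` is acyclic: there is no oriented cycle, i.e. no path
`a₁, …, a_{k+1}` (with `hd aₘ = tl aₘ₊₁`) whose final head equals its initial tail. -/
def FinQuiver.Acyclic (Q : FinQuiver n) : Prop :=
  ∀ (k : ℕ) (c : Fin (k + 1) → Q.Arr),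
    (∀ m : Fin k, Q.hd (c m.castSucc) = Q.tl (c m.succ)) →
    Q.hd (c (Fin.last k)) ≠ Q.tl (c 0)

/-- The Euler form `χ_Q` of the quiver `Q`. -/
def FinQuiver.euler (Q : FinQuiver n) (α β : Fin n → ℕ) : ℤ :=
  ∑ i : Fin n, (α i : ℤ) * β i - ∑ a : Q.Arr, (α (Q.tl a) : ℤ) * β (Q.hd a)

/-- The opposite antisymmetrization `⟨α,β⟩ = χ_Q(β,α) − χ_Q(α,β)`. -/
def FinQuiver.lam (Q : FinQuiver n) (α β : Fin n → ℕ) : ℤ :=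
  Q.euler β α - Q.euler α β

/-- The polynomial ring in the variables `ω_{i,j}`, `i ∈ Q₀`, `j ∈ ℕ` (0-indexed). -/
abbrev PolyQ (n : ℕ) := MvPolynomial (Fin n × ℕ) ℚ

/-- The permutation of the variables at vertex `i` induced by a permutation of `ℕ`. -/
def vertexPerm (i : Fin n) (σ : Equiv.Perm ℕ) : Fin n × ℕ → Fin n × ℕ :=
  fun p => if p.1 = i then (i, σ p.2) else p

/-- `f` is, for each vertex `i`, symmetric in the variables `ω_{i,0},…,ω_{i,γ i − 1}`. -/
def SymmIn (γ : Fin n → ℕ) (f : PolyQ n) : Prop :=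
  ∀ (i : Fin n) (σ : Equiv.Perm ℕ),
    (∀ j : ℕ, σ j ≠ j → j < γ i) → rename (vertexPerm i σ) f = f

lemma vars_smul_subset (c : ℚ) (f : PolyQ n) : (c • f).vars ⊆ f.vars := by
  rw [MvPolynomial.smul_eq_C_mul]
  refine (MvPolynomial.vars_mul _ _).trans ?_
  simp [MvPolynomial.vars_C]

/-- `ℋ_γ`: polynomials using only the variables `ω_{i,j}`, `j < γ i`, which are
symmetric at each vertex.  A `ℚ`-submodule of `PolyQ n`. -/
noncomputable def Hspace (γ : Fin n → ℕ) : Submodule ℚ (PolyQ n) where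
  carrier := {f | (∀ p ∈ f.vars, p.2 < γ p.1) ∧ SymmIn γ f}
  add_mem' := by
    rintro f g ⟨hf1, hf2⟩ ⟨hg1, hg2⟩
    refine ⟨fun p hp => ?_, fun i σ hσ => ?_⟩
    · rcases Finset.mem_union.mp (MvPolynomial.vars_add_subset f g hp) with h | h
      exacts [hf1 p h, hg1 p h]
    · rw [map_add, hf2 i σ hσ, hg2 i σ hσ]
  zero_mem' := by
    refine ⟨fun p hp => ?_, fun i σ hσ => map_zero _⟩
    simp [MvPolynomial.vars_0] at hp
  smul_mem' := by
    rintro c f ⟨hf1, hf2⟩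
    refine ⟨fun p hp => hf1 p (vars_smul_subset c f hp), fun i σ hσ => ?_⟩
    rw [map_smul, hf2 i σ hσ]

/-- Polynomials all of whose variables sit at vertex `i`. -/
noncomputable def onlyVertex (i : Fin n) : Submodule ℚ (PolyQ n) where
  carrier := {f | ∀ p ∈ f.vars, p.1 = i}
  add_mem' := by
    intro f g hf hg p hp
    rcases Finset.mem_union.mp (MvPolynomial.vars_add_subset f g hp) with h | h
    exacts [hf p h, hg p h]
  zero_mem' := by
    intro p hp
    simp [MvPolynomial.vars_0] at hp
  smul_mem' := by
    intro c f hf p hp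
    exact hf p (vars_smul_subset c f hp)

/-- `𝒜_{β,m}`: the subspace of `ℋ_{m·β}` of polynomials depending only on the
variables `ω_{i,0},…,ω_{i,m−1}` at the distinguished vertex `i`. -/
noncomputable def Aspace (β : Fin n → ℕ) (i : Fin n) (m : ℕ) : Submodule ℚ (PolyQ n) :=
  Hspace (fun v => m * β v) ⊓ onlyVertex i

/-- Substitute for the `j`-th variable at vertex `i` the variable `ω_{i,s}` where `s`
is the `j`-th element of `T i` in increasing order. -/
noncomputable def substAlong (T : Fin n → Finset ℕ) : PolyQ n →ₐ[ℚ] PolyQ n :=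
  aeval fun p : Fin n × ℕ => X (p.1, ((T p.1).sort (· ≤ ·)).getD p.2 0)

/-- The index set of the Kontsevich–Soibelman localization sum:
for each vertex, a `γ₁ i`-element subset of `{0,…,γ₁ i + γ₂ i − 1}`. -/
def shuffles (γ₁ γ₂ : Fin n → ℕ) : Finset (Fin n → Finset ℕ) :=
  Fintype.piFinset fun i => (Finset.range (γ₁ i + γ₂ i)).powerset.filter fun s => s.card = γ₁ i

def shuffleCompl (γ₁ γ₂ : Fin n → ℕ) (S : Fin n → Finset ℕ) : Fin n → Finset ℕ :=
  fun i => Finset.range (γ₁ i + γ₂ i) \ S i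

/-- The numerator factor attached to the arrow `a`:
`∏_{j' ∈ S̄_{h a}} ∏_{j ∈ S_{t a}} (ω_{h a, j'} − ω_{t a, j})`. -/
noncomputable def arrowFactor (Q : FinQuiver n) (γ₁ γ₂ : Fin n → ℕ)
    (S : Fin n → Finset ℕ) (a : Q.Arr) : PolyQ n :=
  ∏ j' ∈ shuffleCompl γ₁ γ₂ S (Q.hd a), ∏ j ∈ S (Q.tl a),
    (X (Q.hd a, j') - X (Q.tl a, j))

noncomputable def interactionNum (Q : FinQuiver n) (γ₁ γ₂ : Fin n → ℕ)
    (S : Fin n → Finset ℕ) : PolyQ n :=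
  ∏ a : Q.Arr, arrowFactor Q γ₁ γ₂ S a

noncomputable def interactionDen (γ₁ γ₂ : Fin n → ℕ) (S : Fin n → Finset ℕ) : PolyQ n :=
  ∏ i : Fin n, ∏ j' ∈ shuffleCompl γ₁ γ₂ S i, ∏ j ∈ S i, (X (i, j') - X (i, j))

/-- The Kontsevich–Soibelman localization sum, an element of the field of rational
functions (the fraction field of `PolyQ n`). -/
noncomputable def cohaMulRat (Q : FinQuiver n) (γ₁ γ₂ : Fin n → ℕ) (f₁ f₂ : PolyQ n) :
    FractionRing (PolyQ n) :=
  ∑ S ∈ shuffles γ₁ γ₂,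
    algebraMap (PolyQ n) (FractionRing (PolyQ n))
        (substAlong S f₁ * substAlong (shuffleCompl γ₁ γ₂ S) f₂ * interactionNum Q γ₁ γ₂ S) /
      algebraMap (PolyQ n) (FractionRing (PolyQ n)) (interactionDen γ₁ γ₂ S)

/-- The CoHA product `f₁ * f₂`: the unique polynomial representing the localization
sum (and `0` if the sum were not a polynomial, which never happens). -/
noncomputable def cohaMul (Q : FinQuiver n) (γ₁ γ₂ : Fin n → ℕ) (f₁ f₂ : PolyQ n) : PolyQ n :=
  if h : ∃ P : PolyQ n,
      algebraMap (PolyQ n) (FractionRing (PolyQ n)) P = cohaMulRat Q γ₁ γ₂ f₁ f₂ then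
    h.choose
  else 0

/-- Iterated, left-to-right, CoHA product of a list of dimension-vector/polynomial pairs.
Returns the total dimension vector together with the product. -/
noncomputable def cohaProd (Q : FinQuiver n) :
    List ((Fin n → ℕ) × PolyQ n) → (Fin n → ℕ) × PolyQ n
  | [] => (fun _ => 0, 1)
  | x :: xs => xs.foldl (fun acc y => (acc.1 + y.1, cohaMul Q acc.1 y.1 acc.2 y.2)) x

/-- Left-to-right CoHA product `f 0 * f 1 * ⋯ * f (r−1)` with `f u ∈ ℋ_{γ u}`. -/
noncomputable def cohaProdFin (Q : FinQuiver n) {r : ℕ} (γ : Fin r → Fin n → ℕ)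
    (f : Fin r → PolyQ n) : PolyQ n :=
  (cohaProd Q (List.ofFn fun u => (γ u, f u))).2

/-- The quiver with one vertex and no arrows. -/
def A1 : FinQuiver 1 := { Arr := Empty, hd := Empty.elim, tl := Empty.elim }

/-- `ψ_p = x₁ ^ p ∈ ℋ₁(A₁)`. -/
noncomputable def psi (p : ℕ) : PolyQ 1 := X ((0 : Fin 1), 0) ^ p

def oneDim : Fin 1 → ℕ := fun _ => 1

/-- The simple dimension vector `e_i`. -/
def simpleDim (i : Fin n) : Fin n → ℕ := fun v => if v = i then 1 else 0

/-- A subquiver of `Q`. -/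
structure Subquiver (Q : FinQuiver n) where
  verts : Finset (Fin n)
  arrows : Finset Q.Arr
  hd_mem : ∀ a ∈ arrows, Q.hd a ∈ verts
  tl_mem : ∀ a ∈ arrows, Q.tl a ∈ verts

def Subquiver.Full {Q : FinQuiver n} (Q' : Subquiver Q) : Prop :=
  ∀ a : Q.Arr, Q.hd a ∈ Q'.verts → Q.tl a ∈ Q'.verts → a ∈ Q'.arrows

/-- Adjacency in the underlying undirected graph of a subquiver. -/
def Subquiver.Adj {Q : FinQuiver n} (Q' : Subquiver Q) (x y : Fin n) : Prop :=
  ∃ a ∈ Q'.arrows, (Q.hd a = x ∧ Q.tl a = y) ∨ (Q.hd a = y ∧ Q.tl a = x)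

def Subquiver.Connected {Q : FinQuiver n} (Q' : Subquiver Q) : Prop :=
  ∀ x ∈ Q'.verts, ∀ y ∈ Q'.verts, Relation.ReflTransGen Q'.Adj x y

/-- The Euler form of the subquiver `Q'` (on `ℤ`-valued vectors). -/
def Subquiver.eulerZ {Q : FinQuiver n} (Q' : Subquiver Q) (α β : Fin n → ℤ) : ℤ :=
  ∑ i ∈ Q'.verts, α i * β i - ∑ a ∈ Q'.arrows, α (Q.tl a) * β (Q.hd a)

/-- Positive definiteness of the Tits form of `Q'` on vectors supported on `Q'`. -/
def Subquiver.PosDefTits {Q : FinQuiver n} (Q' : Subquiver Q) : Prop :=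
  ∀ β : Fin n → ℤ, (∀ i, i ∉ Q'.verts → β i = 0) → β ≠ 0 → 0 < Q'.eulerZ β β

/-- A connected full subquiver with positive definite Tits form. -/
def Subquiver.IsDynkin {Q : FinQuiver n} (Q' : Subquiver Q) : Prop :=
  Q'.Connected ∧ Q'.Full ∧ Q'.PosDefTits

/-- A positive root of `Q'`: a nonzero dimension vector supported on `Q'` with
Tits form equal to `1`. -/
def Subquiver.IsPosRoot {Q : FinQuiver n} (Q' : Subquiver Q) (β : Fin n → ℕ) : Prop :=
  (∀ i, i ∉ Q'.verts → β i = 0) ∧ β ≠ 0 ∧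
    Q'.eulerZ (fun i => (β i : ℤ)) (fun i => (β i : ℤ)) = 1

/-- A subquiver regarded as a quiver in its own right (on the ambient vertex set). -/
def Subquiver.toQuiver {Q : FinQuiver n} (Q' : Subquiver Q) : FinQuiver n :=
  { Arr := {a : Q.Arr // a ∈ Q'.arrows}, hd := fun a => Q.hd a.1, tl := fun a => Q.tl a.1 }

/-- An (ordered list) subquiver partition `𝒬• = (Q¹,…,Q^ℓ)`: nonempty connected
subquivers whose vertex sets partition `Q₀`. -/
structure SubqPartition (Q : FinQuiver n) (ℓ : ℕ) where
  part : Fin ℓ → Subquiver Q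
  nonempty' : ∀ j, (part j).verts.Nonempty
  connected' : ∀ j, (part j).Connected
  cover : ∀ i : Fin n, ∃! j, i ∈ (part j).verts

/-- The set `𝒬•₁` of arrows belonging to one of the parts. -/
noncomputable def SubqPartition.arrs {Q : FinQuiver n} {ℓ : ℕ} (P : SubqPartition Q ℓ) : Finset Q.Arr :=
  Finset.univ.biUnion fun j => (P.part j).arrows

/-- The partition is admissible and ordered: every arrow not inside a part goes from a
later part to an earlier part (head before tail). -/
def SubqPartition.Ordered {Q : FinQuiver n} {ℓ : ℕ} (P : SubqPartition Q ℓ) : Prop :=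
  ∀ a : Q.Arr, a ∉ P.arrs → ∀ i j : Fin ℓ,
    Q.hd a ∈ (P.part i).verts → Q.tl a ∈ (P.part j).verts → i < j

/-- Every part is a Dynkin subquiver. -/
def SubqPartition.Dynkin {Q : FinQuiver n} {ℓ : ℕ} (P : SubqPartition Q ℓ) : Prop :=
  ∀ j, (P.part j).IsDynkin

/-- `β : Fin r → (Fin n → ℕ)` is a Reineke-ordered enumeration of `Φ₊(𝒬•)`, with
`blk u` the part to which `β u` belongs: block-monotone, enumerating all positive roots
without repetition, and within each block `u < v → ⟨β u, β v⟩ ≥ 0`. -/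
def IsReinekeOrder {Q : FinQuiver n} {ℓ : ℕ} (P : SubqPartition Q ℓ) {r : ℕ}
    (β : Fin r → Fin n → ℕ) (blk : Fin r → Fin ℓ) : Prop :=
  Monotone blk ∧
  (∀ u, (P.part (blk u)).IsPosRoot (β u)) ∧
  Function.Injective β ∧
  (∀ j (b : Fin n → ℕ), (P.part j).IsPosRoot b → ∃ u, β u = b) ∧
  (∀ u v : Fin r, u < v → blk u = blk v → 0 ≤ Q.lam (β u) (β v))

/-! ### Auxiliary development for the CoHA multiplication theorem -/

section CoHAProof
open Finset

variable {n : ℕ}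

lemma mem_Hspace_iff {γ : Fin n → ℕ} {f : PolyQ n} :
    f ∈ Hspace γ ↔ (∀ p ∈ f.vars, p.2 < γ p.1) ∧ SymmIn γ f := Iff.rfl

noncomputable def sortFun (T : Finset ℕ) (j : ℕ) : ℕ := (T.sort (· ≤ ·)).getD j 0

lemma substAlong_eq_rename (T : Fin n → Finset ℕ) (f : PolyQ n) :
    substAlong T f = rename (fun p : Fin n × ℕ => (p.1, sortFun (T p.1) p.2)) f := by
  rw [substAlong, rename_eq_aeval]; rfl

lemma sortFun_lt_length {T : Finset ℕ} {j : ℕ} (h : j < T.card) :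
    j < (T.sort (· ≤ ·)).length := by rwa [Finset.length_sort]

lemma sortFun_mem {T : Finset ℕ} {j : ℕ} (h : j < T.card) : sortFun T j ∈ T := by
  have hl := sortFun_lt_length h
  rw [sortFun, List.getD_eq_getElem _ _ hl]
  exact (Finset.mem_sort _).1 (List.getElem_mem hl)

lemma sortFun_injOn (T : Finset ℕ) : Set.InjOn (sortFun T) (Set.Iio T.card) := by
  intro x hx y hy hxy
  have hx' := sortFun_lt_length hx
  have hy' := sortFun_lt_length hy
  simp only [sortFun] at hxy
  rw [List.getD_eq_getElem _ _ hx'] at hxy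
  rw [List.getD_eq_getElem _ _ hy'] at hxy
  exact ((Finset.sort_nodup (s := T) (r := (· ≤ ·))).getElem_inj_iff).1 hxy

lemma sortFun_surjOn {T : Finset ℕ} {x : ℕ} (hx : x ∈ T) :
    ∃ j < T.card, sortFun T j = x := by
  have : x ∈ T.sort (· ≤ ·) := (Finset.mem_sort _).2 hx
  obtain ⟨j, hj, hjx⟩ := List.mem_iff_getElem.1 this
  refine ⟨j, by rwa [Finset.length_sort] at hj, ?_⟩
  rw [sortFun, List.getD_eq_getElem _ _ hj, hjx]

lemma rename_congr_vars {f : PolyQ n} {u u' : Fin n × ℕ → Fin n × ℕ}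
    (h : ∀ p ∈ f.vars, u p = u' p) : rename u f = rename u' f := by
  have := MvPolynomial.hom_congr_vars
    (f₁ := (rename (R := ℚ) u).toRingHom) (f₂ := (rename (R := ℚ) u').toRingHom)
    (p₁ := f) (p₂ := f) ?_ ?_ rfl
  · exact this
  · ext a : 1 <;> simp
  · intro p hp _
    simp [h p hp]

lemma exists_perm_nat {m : ℕ} (t : Equiv.Perm (Fin m)) :
    ∃ σ : Equiv.Perm ℕ, (∀ j, σ j ≠ j → j < m) ∧ ∀ j : Fin m, σ (j : ℕ) = (t j : ℕ) := by
  classical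
  refine ⟨t.extendDomain Fin.equivSubtype, fun j hj => ?_, fun j => ?_⟩
  · by_contra h
    exact hj (t.extendDomain_apply_not_subtype Fin.equivSubtype (by simpa using h))
  · have := t.extendDomain_apply_subtype Fin.equivSubtype (b := (j : ℕ)) j.2
    simpa [Fin.equivSubtype] using this

lemma vertexPerm_apply_ne {i : Fin n} (σ : Equiv.Perm ℕ) {p : Fin n × ℕ} (h : p.1 ≠ i) :
    vertexPerm i σ p = p := by simp [vertexPerm, h]

lemma vertexPerm_apply_eq {i : Fin n} (σ : Equiv.Perm ℕ) (j : ℕ) :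
    vertexPerm i σ (i, j) = (i, σ j) := by simp [vertexPerm]

lemma vertexPerm_apply_ne' {i : Fin n} (σ : Equiv.Perm ℕ) {v : Fin n} (h : v ≠ i) (x : ℕ) :
    vertexPerm i σ (v, x) = (v, x) := by simp [vertexPerm, h]

/-- Key symmetry lemma: renaming `f ∈ ℋ_γ` along two vertexwise maps which
at vertex `i` are injective enumerations with the same image, and agree elsewhere,
gives the same result. -/
lemma rename_eq_of_images {γ : Fin n → ℕ} {f : PolyQ n} (hf : f ∈ Hspace γ) (i : Fin n)
    {u u' : Fin n × ℕ → Fin n × ℕ} {e e' : ℕ → ℕ}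
    (hu : ∀ j, u (i, j) = (i, e j)) (hu' : ∀ j, u' (i, j) = (i, e' j))
    (hoff : ∀ p : Fin n × ℕ, p.1 ≠ i → u p = u' p)
    (hinje : Set.InjOn e (Set.Iio (γ i)))
    (him : ∀ j, j < γ i → ∃ j', j' < γ i ∧ e' j' = e j) :
    rename u f = rename u' f := by
  classical
  symm
  have ht : ∀ j : Fin (γ i), ∃ j' : Fin (γ i), e' (j' : ℕ) = e (j : ℕ) := by
    intro j
    obtain ⟨j', hj', hej⟩ := him j j.2
    exact ⟨⟨j', hj'⟩, hej⟩
  choose t htt using ht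
  have tinj : Function.Injective t := by
    intro j1 j2 h12
    have : e (j1 : ℕ) = e (j2 : ℕ) := by rw [← htt j1, ← htt j2, h12]
    exact Fin.ext (hinje j1.2 j2.2 this)
  let τ : Equiv.Perm (Fin (γ i)) := Equiv.ofBijective t (Finite.injective_iff_bijective.1 tinj)
  obtain ⟨σ, hσs, hσ⟩ := exists_perm_nat τ
  have hsym : rename (vertexPerm i σ) f = f := hf.2 i σ hσs
  calc rename u' f = rename u' (rename (vertexPerm i σ) f) := by rw [hsym]
    _ = rename (u' ∘ vertexPerm i σ) f := by rw [MvPolynomial.rename_rename]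
    _ = rename u f := by
        refine rename_congr_vars fun p hp => ?_
        by_cases hpi : p.1 = i
        · obtain ⟨p1, j⟩ := p
          cases hpi
          have hj : j < γ p1 := hf.1 _ hp
          have : σ j = (t ⟨j, hj⟩ : ℕ) := hσ ⟨j, hj⟩
          simp only [Function.comp_apply, vertexPerm_apply_eq, hu', hu, this, htt ⟨j, hj⟩]
        · simp only [Function.comp_apply, vertexPerm_apply_ne σ hpi]
          exact (hoff p hpi).symm

/-! #### Collapsing a variable, and primality of variable differences -/

noncomputable def collapseVar (u v : Fin n × ℕ) : Fin n × ℕ → Fin n × ℕ :=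
  fun p => if p = u then v else p

lemma sub_dvd_rename_collapse (u v : Fin n × ℕ) (f : PolyQ n) :
    (X v - X u : PolyQ n) ∣ f - rename (collapseVar u v) f := by
  induction f using MvPolynomial.induction_on with
  | C a => simp
  | add p q hp hq =>
      have : p + q - rename (collapseVar u v) (p + q)
          = (p - rename (collapseVar u v) p) + (q - rename (collapseVar u v) q) := by
        rw [map_add]; ring
      rw [this]; exact dvd_add hp hq
  | mul_X p s hp =>
      have hkey : p * X s - rename (collapseVar u v) (p * X s)
          = (p - rename (collapseVar u v) p) * X s
            + rename (collapseVar u v) p * (X s - X (collapseVar u v s)) := by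
        rw [map_mul, MvPolynomial.rename_X]; ring
      rw [hkey]
      refine dvd_add (Dvd.dvd.mul_right hp _) (Dvd.dvd.mul_left ?_ _)
      by_cases hs : s = u
      · subst hs
        have hc : collapseVar s v s = v := if_pos rfl
        rw [hc]
        exact ⟨-1, by ring⟩
      · simp [collapseVar, hs]

lemma dvd_of_collapse_eq_zero {u v : Fin n × ℕ} {f : PolyQ n}
    (h : rename (collapseVar u v) f = 0) : (X v - X u : PolyQ n) ∣ f := by
  simpa [h] using sub_dvd_rename_collapse u v f

lemma prime_X_sub_X {u v : Fin n × ℕ} (huv : u ≠ v) : Prime (X u - X v : PolyQ n) := by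
  classical
  let E1 : (Fin n × ℕ) ≃ Option {p : Fin n × ℕ // p ≠ u} := (Equiv.optionSubtypeNe u).symm
  let e := (MvPolynomial.renameEquiv ℚ E1).trans
    (MvPolynomial.optionEquivLeft ℚ {p : Fin n × ℕ // p ≠ u})
  have h1 : e (X u - X v)
      = Polynomial.X - Polynomial.C (X ⟨v, Ne.symm huv⟩) := by
    have hu : E1 u = none := by simp [E1]
    have hv : E1 v = some ⟨v, Ne.symm huv⟩ := by
      simp [E1, Equiv.optionSubtypeNe_symm_of_ne (Ne.symm huv)]
    simp [e, MvPolynomial.renameEquiv_apply, hu, hv,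
      MvPolynomial.optionEquivLeft_X_some, MvPolynomial.optionEquivLeft_X_none]
  rw [← MulEquiv.prime_iff e.toRingEquiv.toMulEquiv]
  have h1' : e.toRingEquiv.toMulEquiv (X u - X v)
      = Polynomial.X - Polynomial.C (X ⟨v, Ne.symm huv⟩) := h1
  rw [h1']
  exact Polynomial.prime_X_sub_C _

lemma X_sub_X_ne_zero {u v : Fin n × ℕ} (huv : u ≠ v) : (X u - X v : PolyQ n) ≠ 0 := by
  intro h
  exact huv (MvPolynomial.X_injective (sub_eq_zero.1 h))

lemma not_dvd_X_sub_X {u v u' v' : Fin n × ℕ} (huv : u ≠ v) (hu'v' : u' ≠ v')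
    (h1 : ¬(u' = u ∧ v' = v)) (h2 : ¬(u' = v ∧ v' = u)) :
    ¬ ((X u - X v : PolyQ n) ∣ X u' - X v') := by
  intro ⟨g, hg⟩
  have hz : rename (collapseVar u v) (X u' - X v' : PolyQ n) = 0 := by
    rw [hg, map_mul, map_sub, MvPolynomial.rename_X, MvPolynomial.rename_X]
    have hcu : collapseVar u v u = v := if_pos rfl
    have hcv : collapseVar u v v = v := by
      by_cases h : v = u
      · exact h.symm ▸ hcu
      · exact if_neg h
    rw [hcu, hcv, sub_self, zero_mul]
  rw [map_sub, MvPolynomial.rename_X, MvPolynomial.rename_X, sub_eq_zero] at hz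
  have hcc : collapseVar u v u' = collapseVar u v v' := MvPolynomial.X_injective hz
  unfold collapseVar at hcc
  by_cases hu' : u' = u <;> by_cases hv' : v' = u
  · exact hu'v' (hu'.trans hv'.symm)
  · rw [if_pos hu', if_neg hv'] at hcc
    by_cases hvv : v' = v
    · exact h1 ⟨hu', hvv⟩
    · exact hvv hcc.symm
  · rw [if_neg hu', if_pos hv'] at hcc
    by_cases huu : u' = v
    · exact h2 ⟨huu, hv'⟩
    · exact huu hcc
  · rw [if_neg hu', if_neg hv'] at hcc
    exact hu'v' hcc

lemma prod_sq_dvd {ι : Type*} [DecidableEq ι] {s : Finset ι} {g : ι → PolyQ n} {N : PolyQ n}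
    (hp : ∀ k ∈ s, Prime (g k))
    (hnd : ∀ k ∈ s, ∀ l ∈ s, k ≠ l → ¬ g k ∣ g l)
    (hd : ∀ k ∈ s, g k ^ 2 ∣ N) : (∏ k ∈ s, g k ^ 2) ∣ N := by
  classical
  induction s using Finset.induction with
  | empty => simpa using dvd_refl N  -- 1 ∣ N
  | @insert k s hk ih =>
      have hPs : (∏ l ∈ s, g l ^ 2) ∣ N :=
        ih (fun l hl => hp l (mem_insert_of_mem hl))
          (fun l hl l' hl' => hnd l (mem_insert_of_mem hl) l' (mem_insert_of_mem hl'))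
          (fun l hl => hd l (mem_insert_of_mem hl))
      obtain ⟨M, hM⟩ := hPs
      have hpk : Prime (g k) := hp k (mem_insert_self k s)
      have hnotdvd : ¬ g k ∣ ∏ l ∈ s, g l ^ 2 := by
        intro hdvd
        obtain ⟨l, hl, hdl⟩ := (hpk.dvd_finset_prod_iff _).1 hdvd
        have : g k ∣ g l := hpk.dvd_of_dvd_pow hdl
        exact hnd k (mem_insert_self k s) l (mem_insert_of_mem hl)
          (fun h => hk (h ▸ hl)) this
      have hk2 : g k ^ 2 ∣ N := hd k (mem_insert_self k s)
      -- from g k ^ 2 ∣ (∏ s) * M with g k prime not dividing ∏ s, get g k ^ 2 ∣ M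
      have h1 : g k ∣ M := by
        have : g k ∣ (∏ l ∈ s, g l ^ 2) * M := hM ▸ dvd_trans (dvd_pow_self _ two_ne_zero) hk2
        exact (hpk.dvd_mul.1 this).resolve_left hnotdvd
      obtain ⟨M1, hM1⟩ := h1
      have h2 : g k ∣ M1 := by
        obtain ⟨t, ht⟩ := hk2
        have hne : g k ≠ 0 := hpk.ne_zero
        have : (∏ l ∈ s, g l ^ 2) * M1 = g k * t := by
          apply mul_left_cancel₀ hne
          calc g k * ((∏ l ∈ s, g l ^ 2) * M1)
              = (∏ l ∈ s, g l ^ 2) * (g k * M1) := by ring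
            _ = N := by rw [← hM1, hM]
            _ = g k ^ 2 * t := ht
            _ = g k * (g k * t) := by ring
        have : g k ∣ (∏ l ∈ s, g l ^ 2) * M1 := ⟨t, this⟩
        exact (hpk.dvd_mul.1 this).resolve_left hnotdvd
      obtain ⟨M2, hM2⟩ := h2
      refine ⟨M2, ?_⟩
      rw [Finset.prod_insert hk, hM, hM1, hM2]
      ring

/-! #### The combinatorial setup -/

noncomputable def ordPairs (m : ℕ) : Finset (ℕ × ℕ) :=
  (Finset.range m ×ˢ Finset.range m).filter fun q => q.1 ≠ q.2

noncomputable def sortedPairs (m : ℕ) : Finset (ℕ × ℕ) :=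
  (Finset.range m ×ˢ Finset.range m).filter fun q => q.1 < q.2

noncomputable def vFactor (i : Fin n) (q : ℕ × ℕ) : PolyQ n := X (i, q.1) - X (i, q.2)

noncomputable def bigD (γ : Fin n → ℕ) : PolyQ n := ∏ i, ∏ q ∈ ordPairs (γ i), vFactor i q

noncomputable def cofac (γ₁ γ₂ : Fin n → ℕ) (S : Fin n → Finset ℕ) : PolyQ n :=
  ∏ i, ∏ q ∈ ordPairs (γ₁ i + γ₂ i) \ (shuffleCompl γ₁ γ₂ S i ×ˢ S i), vFactor i q

noncomputable def numTerm (Q : FinQuiver n) (γ₁ γ₂ : Fin n → ℕ) (f₁ f₂ : PolyQ n)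
    (S : Fin n → Finset ℕ) : PolyQ n :=
  substAlong S f₁ * substAlong (shuffleCompl γ₁ γ₂ S) f₂ * interactionNum Q γ₁ γ₂ S
    * cofac γ₁ γ₂ S

noncomputable def bigN (Q : FinQuiver n) (γ₁ γ₂ : Fin n → ℕ) (f₁ f₂ : PolyQ n) : PolyQ n :=
  ∑ S ∈ shuffles γ₁ γ₂, numTerm Q γ₁ γ₂ f₁ f₂ S

lemma mem_shuffles_iff {γ₁ γ₂ : Fin n → ℕ} {S : Fin n → Finset ℕ} :
    S ∈ shuffles γ₁ γ₂ ↔ ∀ i, S i ⊆ Finset.range (γ₁ i + γ₂ i) ∧ (S i).card = γ₁ i := by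
  simp only [shuffles, Fintype.mem_piFinset, Finset.mem_filter, Finset.mem_powerset]

lemma card_shuffleCompl {γ₁ γ₂ : Fin n → ℕ} {S : Fin n → Finset ℕ}
    (hS : S ∈ shuffles γ₁ γ₂) (i : Fin n) : (shuffleCompl γ₁ γ₂ S i).card = γ₂ i := by
  obtain ⟨hsub, hcard⟩ := mem_shuffles_iff.1 hS i
  rw [shuffleCompl, Finset.card_sdiff_of_subset hsub, Finset.card_range, hcard]
  omega

lemma vFactor_ne_zero {i : Fin n} {q : ℕ × ℕ} (h : q.1 ≠ q.2) : vFactor i q ≠ 0 :=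
  X_sub_X_ne_zero (by simp [h])

lemma mem_ordPairs {m : ℕ} {q : ℕ × ℕ} :
    q ∈ ordPairs m ↔ q.1 < m ∧ q.2 < m ∧ q.1 ≠ q.2 := by
  simp only [ordPairs, Finset.mem_filter, Finset.mem_product, Finset.mem_range]
  tauto

lemma bigD_ne_zero (γ : Fin n → ℕ) : bigD γ ≠ 0 := by
  rw [bigD]
  refine Finset.prod_ne_zero_iff.2 fun i _ => Finset.prod_ne_zero_iff.2 fun q hq => ?_
  exact vFactor_ne_zero (mem_ordPairs.1 hq).2.2

lemma interactionDen_eq_prod {γ₁ γ₂ : Fin n → ℕ} (S : Fin n → Finset ℕ) :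
    interactionDen γ₁ γ₂ S = ∏ i, ∏ q ∈ shuffleCompl γ₁ γ₂ S i ×ˢ S i, vFactor i q := by
  rw [interactionDen]
  refine Finset.prod_congr rfl fun i _ => ?_
  rw [Finset.prod_product]
  simp [vFactor]

lemma prodSub_subset_ordPairs {γ₁ γ₂ : Fin n → ℕ} {S : Fin n → Finset ℕ}
    (hS : S ∈ shuffles γ₁ γ₂) (i : Fin n) :
    shuffleCompl γ₁ γ₂ S i ×ˢ S i ⊆ ordPairs (γ₁ i + γ₂ i) := by
  rintro ⟨x, y⟩ hxy
  rw [Finset.mem_product] at hxy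
  obtain ⟨hx, hy⟩ := hxy
  rw [shuffleCompl, Finset.mem_sdiff, Finset.mem_range] at hx
  have hy' := (mem_shuffles_iff.1 hS i).1 hy
  rw [Finset.mem_range] at hy'
  refine mem_ordPairs.2 ⟨hx.1, hy', fun h => hx.2 (h ▸ hy)⟩

lemma den_mul_cofac {γ₁ γ₂ : Fin n → ℕ} {S : Fin n → Finset ℕ} (hS : S ∈ shuffles γ₁ γ₂) :
    interactionDen γ₁ γ₂ S * cofac γ₁ γ₂ S = bigD (fun i => γ₁ i + γ₂ i) := by
  rw [interactionDen_eq_prod, cofac, bigD, ← Finset.prod_mul_distrib]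
  refine Finset.prod_congr rfl fun i _ => ?_
  rw [mul_comm]
  exact Finset.prod_sdiff (prodSub_subset_ordPairs hS i)

lemma cofac_ne_zero {γ₁ γ₂ : Fin n → ℕ} {S : Fin n → Finset ℕ} (hS : S ∈ shuffles γ₁ γ₂) :
    cofac γ₁ γ₂ S ≠ 0 := by
  intro h
  exact bigD_ne_zero (fun i => γ₁ i + γ₂ i) (by rw [← den_mul_cofac hS, h, mul_zero])

lemma cohaMulRat_eq_div (Q : FinQuiver n) (γ₁ γ₂ : Fin n → ℕ) (f₁ f₂ : PolyQ n) :
    cohaMulRat Q γ₁ γ₂ f₁ f₂ =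
      algebraMap (PolyQ n) (FractionRing (PolyQ n)) (bigN Q γ₁ γ₂ f₁ f₂) /
        algebraMap (PolyQ n) (FractionRing (PolyQ n)) (bigD (fun i => γ₁ i + γ₂ i)) := by
  rw [bigN, map_sum, Finset.sum_div, cohaMulRat]
  refine Finset.sum_congr rfl fun S hS => ?_
  have hc : algebraMap (PolyQ n) (FractionRing (PolyQ n)) (cofac γ₁ γ₂ S) ≠ 0 := by
    rw [map_ne_zero_iff _ (IsFractionRing.injective (PolyQ n) (FractionRing (PolyQ n)))]
    exact cofac_ne_zero hS
  rw [numTerm, ← den_mul_cofac hS]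
  rw [map_mul _ (interactionDen γ₁ γ₂ S) (cofac γ₁ γ₂ S)]
  rw [map_mul _ (substAlong S f₁ * substAlong (shuffleCompl γ₁ γ₂ S) f₂
      * interactionNum Q γ₁ γ₂ S) (cofac γ₁ γ₂ S)]
  rw [mul_div_mul_right _ _ hc, map_mul, map_mul]

lemma mem_sortedPairs {m : ℕ} {q : ℕ × ℕ} :
    q ∈ sortedPairs m ↔ q.1 < m ∧ q.2 < m ∧ q.1 < q.2 := by
  simp only [sortedPairs, Finset.mem_filter, Finset.mem_product, Finset.mem_range]
  tauto

lemma sortedPairs_subset_ordPairs {m : ℕ} : sortedPairs m ⊆ ordPairs m := by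
  intro q hq
  obtain ⟨h1, h2, h3⟩ := mem_sortedPairs.1 hq
  exact mem_ordPairs.2 ⟨h1, h2, Nat.ne_of_lt h3⟩

lemma ordPairs_sdiff_sorted (m : ℕ) :
    ordPairs m \ sortedPairs m = (sortedPairs m).image Prod.swap := by
  ext ⟨x, y⟩
  simp only [Finset.mem_sdiff, mem_ordPairs, mem_sortedPairs, Finset.mem_image]
  constructor
  · rintro ⟨⟨hx, hy, hne⟩, hns⟩
    have : y < x := by
      rcases Nat.lt_or_ge x y with h | h
      · exact absurd ⟨hx, hy, h⟩ hns
      · omega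
    exact ⟨(y, x), ⟨hy, hx, this⟩, rfl⟩
  · rintro ⟨⟨a, b⟩, ⟨ha, hb, hab⟩, h⟩
    simp only [Prod.swap_prod_mk, Prod.mk.injEq] at h
    obtain ⟨rfl, rfl⟩ := h
    exact ⟨⟨hb, ha, by omega⟩, by omega⟩

lemma prod_ordPairs_eq (i : Fin n) (m : ℕ) :
    ∏ q ∈ ordPairs m, vFactor i q
      = (-1 : PolyQ n) ^ (sortedPairs m).card * ∏ q ∈ sortedPairs m, vFactor i q ^ 2 := by
  rw [← Finset.prod_sdiff (sortedPairs_subset_ordPairs (m := m)), ordPairs_sdiff_sorted]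
  rw [Finset.prod_image (by
    intro x _ y _ hxy
    exact Prod.swap_injective hxy)]
  rw [← Finset.prod_mul_distrib]
  have : ∀ q ∈ sortedPairs m, vFactor i q.swap * vFactor i q
      = (-1 : PolyQ n) * vFactor i q ^ 2 := by
    intro q _
    simp only [vFactor, Prod.fst_swap, Prod.snd_swap]
    ring
  rw [Finset.prod_congr rfl this, Finset.prod_mul_distrib, Finset.prod_const]

lemma bigD_dvd_of_squares {γ : Fin n → ℕ} {N : PolyQ n}
    (hsq : ∀ i : Fin n, ∀ q ∈ sortedPairs (γ i), vFactor i q ^ 2 ∣ N) : bigD γ ∣ N := by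
  classical
  have hD : bigD γ = ((-1 : PolyQ n) ^ ∑ i, (sortedPairs (γ i)).card)
      * ∏ x ∈ (Finset.univ.sigma fun i : Fin n => sortedPairs (γ i)),
          vFactor x.1 x.2 ^ 2 := by
    rw [bigD, Finset.prod_congr rfl fun i _ => prod_ordPairs_eq i (γ i),
      Finset.prod_mul_distrib, Finset.prod_pow_eq_pow_sum, Finset.prod_sigma]
  rw [hD, IsUnit.mul_left_dvd (IsUnit.pow _ isUnit_one.neg)]
  refine prod_sq_dvd ?_ ?_ ?_
  · rintro ⟨i, q⟩ hk
    rw [Finset.mem_sigma] at hk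
    dsimp only at hk ⊢
    have hq := mem_sortedPairs.1 hk.2
    exact prime_X_sub_X (by simp only [Prod.ext_iff, ne_eq, not_and]; omega)
  · rintro ⟨i, q⟩ hk ⟨i', q'⟩ hl hne hdvd
    rw [Finset.mem_sigma] at hk hl
    dsimp only at hk hl
    have hq := mem_sortedPairs.1 hk.2
    have hq' := mem_sortedPairs.1 hl.2
    have hdvd' : (X (i, q.1) - X (i, q.2) : PolyQ n) ∣ X (i', q'.1) - X (i', q'.2) := hdvd
    refine not_dvd_X_sub_X (u := (i, q.1)) (v := (i, q.2)) (u' := (i', q'.1)) (v' := (i', q'.2))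
      (by simp only [Prod.ext_iff, ne_eq, not_and]; omega)
      (by simp only [Prod.ext_iff, ne_eq, not_and]; omega) ?_ ?_ hdvd'
    · rintro ⟨h1, h2⟩
      rw [Prod.mk.injEq] at h1 h2
      refine hne ?_
      obtain ⟨hii, hqq1⟩ := h1
      obtain ⟨-, hqq2⟩ := h2
      subst hii
      have hqq : q' = q := Prod.ext hqq1 hqq2
      rw [hqq]
    · rintro ⟨h1, h2⟩
      rw [Prod.mk.injEq] at h1 h2
      have e1 := h1.2
      have e2 := h2.2
      omega
  · rintro ⟨i, q⟩ hk
    rw [Finset.mem_sigma] at hk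
    exact hsq i q hk.2

/-! #### Swapping machinery -/

def hcol (a b : ℕ) : ℕ → ℕ := fun x => if x = b then a else x

noncomputable def swapSh (i0 : Fin n) (a b : ℕ) (S : Fin n → Finset ℕ) : Fin n → Finset ℕ :=
  fun i => if i = i0 then (S i0).image (Equiv.swap a b) else S i

section SwapFacts
variable {i0 : Fin n} {a b : ℕ}

lemma hcol_swap (hab : a ≠ b) (x : ℕ) : hcol a b (Equiv.swap a b x) = hcol a b x := by
  rcases eq_or_ne x a with rfl | hxa
  · rw [Equiv.swap_apply_left]
    simp [hcol, hab.symm]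
  rcases eq_or_ne x b with rfl | hxb
  · rw [Equiv.swap_apply_right]
    simp [hcol, hab.symm]
  · rw [Equiv.swap_apply_of_ne_of_ne hxa hxb]

lemma hcol_injOn (hab : a ≠ b) {U : Finset ℕ} (h : ¬(a ∈ U ∧ b ∈ U)) :
    ∀ x ∈ U, ∀ y ∈ U, hcol a b x = hcol a b y → x = y := by
  intro x hx y hy hxy
  unfold hcol at hxy
  by_cases hxb : x = b <;> by_cases hyb : y = b
  · rw [hxb, hyb]
  · rw [if_pos hxb, if_neg hyb] at hxy
    exact absurd ⟨hxy ▸ hy, hxb ▸ hx⟩ h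
  · rw [if_neg hxb, if_pos hyb] at hxy
    exact absurd ⟨hxy ▸ hx, hyb ▸ hy⟩ h
  · rwa [if_neg hxb, if_neg hyb] at hxy

lemma mem_image_swap {U : Finset ℕ} {x : ℕ} :
    x ∈ U.image (Equiv.swap a b) ↔ Equiv.swap a b x ∈ U := by
  constructor
  · intro h
    obtain ⟨y, hy, rfl⟩ := Finset.mem_image.1 h
    rwa [Equiv.swap_apply_self]
  · intro h
    exact Finset.mem_image.2 ⟨_, h, Equiv.swap_apply_self _ _ _⟩

lemma swap_lt {m : ℕ} (ha : a < m) (hb : b < m) (x : ℕ) :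
    Equiv.swap a b x < m ↔ x < m := by
  rcases eq_or_ne x a with rfl | hxa
  · rw [Equiv.swap_apply_left]; omega
  rcases eq_or_ne x b with rfl | hxb
  · rw [Equiv.swap_apply_right]; omega
  · rw [Equiv.swap_apply_of_ne_of_ne hxa hxb]

lemma swapSh_apply_i0 (S : Fin n → Finset ℕ) :
    swapSh i0 a b S i0 = (S i0).image (Equiv.swap a b) := if_pos rfl

lemma swapSh_apply_ne (S : Fin n → Finset ℕ) {i : Fin n} (h : i ≠ i0) :
    swapSh i0 a b S i = S i := if_neg h

lemma swapSh_involutive (S : Fin n → Finset ℕ) : swapSh i0 a b (swapSh i0 a b S) = S := by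
  funext i
  by_cases h : i = i0
  · subst h
    rw [swapSh_apply_i0, swapSh_apply_i0, Finset.image_image]
    have : (⇑(Equiv.swap a b) ∘ ⇑(Equiv.swap a b)) = id := by
      funext x; exact Equiv.swap_apply_self _ _ _
    rw [this, Finset.image_id]
  · rw [swapSh_apply_ne _ h, swapSh_apply_ne _ h]

variable {γ₁ γ₂ : Fin n → ℕ}

lemma swapSh_mem_shuffles (ham : a < γ₁ i0 + γ₂ i0) (hbm : b < γ₁ i0 + γ₂ i0)
    {S : Fin n → Finset ℕ} (hS : S ∈ shuffles γ₁ γ₂) :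
    swapSh i0 a b S ∈ shuffles γ₁ γ₂ := by
  rw [mem_shuffles_iff] at hS ⊢
  intro i
  by_cases h : i = i0
  · subst h
    rw [swapSh_apply_i0]
    refine ⟨fun x hx => ?_, ?_⟩
    · rw [mem_image_swap] at hx
      have := (hS i).1 hx
      rw [Finset.mem_range] at this ⊢
      exact (swap_lt ham hbm x).1 this  -- careful direction
    · rw [Finset.card_image_of_injective _ (Equiv.injective _)]
      exact (hS i).2
  · rw [swapSh_apply_ne _ h]
    exact hS i

lemma swapSh_compl (ham : a < γ₁ i0 + γ₂ i0) (hbm : b < γ₁ i0 + γ₂ i0)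
    (S : Fin n → Finset ℕ) :
    shuffleCompl γ₁ γ₂ (swapSh i0 a b S) i0
      = (shuffleCompl γ₁ γ₂ S i0).image (Equiv.swap a b) := by
  ext x
  rw [mem_image_swap, shuffleCompl, shuffleCompl, Finset.mem_sdiff, Finset.mem_sdiff,
    swapSh_apply_i0, mem_image_swap, Finset.mem_range, Finset.mem_range, swap_lt ham hbm]

lemma swapSh_compl_ne (S : Fin n → Finset ℕ) {i : Fin n} (h : i ≠ i0) :
    shuffleCompl γ₁ γ₂ (swapSh i0 a b S) i = shuffleCompl γ₁ γ₂ S i := by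
  rw [shuffleCompl, shuffleCompl, swapSh_apply_ne _ h]

lemma collapse_at (x : ℕ) :
    collapseVar (i0, b) (i0, a) (i0, x) = (i0, hcol a b x) := by
  unfold collapseVar hcol
  by_cases h : x = b
  · rw [if_pos (by rw [h]), if_pos h]
  · rw [if_neg (by simp [h]), if_neg h]

lemma collapse_off {v : Fin n} (h : v ≠ i0) (x : ℕ) :
    collapseVar (i0, b) (i0, a) (v, x) = (v, x) := by
  unfold collapseVar
  rw [if_neg (by simp [h])]

lemma prod_image_swap (hab : a ≠ b) (U : Finset ℕ) (F : ℕ → PolyQ n) :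
    ∏ x ∈ U.image (Equiv.swap a b), F (hcol a b x) = ∏ x ∈ U, F (hcol a b x) := by
  rw [Finset.prod_image (fun x _ y _ h => Equiv.injective _ h)]
  exact Finset.prod_congr rfl fun x _ => by rw [hcol_swap hab]

end SwapFacts

section CollapseInv
variable {i0 : Fin n} {a b : ℕ}

lemma rename_collapse_substAlong {γ : Fin n → ℕ} {f : PolyQ n} (hf : f ∈ Hspace γ)
    (hab : a ≠ b) (T T' : Fin n → Finset ℕ) (hcard : (T i0).card = γ i0)
    (hT' : T' i0 = (T i0).image (Equiv.swap a b)) (hoffT : ∀ i, i ≠ i0 → T' i = T i)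
    (hone : ¬(a ∈ T i0 ∧ b ∈ T i0)) :
    rename (collapseVar (i0, b) (i0, a)) (substAlong T f)
      = rename (collapseVar (i0, b) (i0, a)) (substAlong T' f) := by
  have hcard' : (T' i0).card = γ i0 := by
    rw [hT', Finset.card_image_of_injective _ (Equiv.injective _), hcard]
  have hone' : ¬(a ∈ T' i0 ∧ b ∈ T' i0) := by
    rw [hT']
    intro ⟨h1, h2⟩
    rw [mem_image_swap, Equiv.swap_apply_left] at h1
    rw [mem_image_swap, Equiv.swap_apply_right] at h2
    exact hone ⟨h2, h1⟩
  rw [substAlong_eq_rename, substAlong_eq_rename, MvPolynomial.rename_rename,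
    MvPolynomial.rename_rename]
  refine rename_eq_of_images hf i0
    (e := fun j => hcol a b (sortFun (T i0) j)) (e' := fun j => hcol a b (sortFun (T' i0) j))
    (fun j => ?_) (fun j => ?_) (fun p hp => ?_) ?_ ?_
  · exact collapse_at _
  · exact collapse_at _
  · obtain ⟨v, x⟩ := p
    simp only [Function.comp_apply]
    rw [collapse_off hp, collapse_off hp, hoffT v hp]
  · intro x hx y hy hxy
    rw [Set.mem_Iio] at hx hy
    have hx' := sortFun_mem (hcard ▸ hx)
    have hy' := sortFun_mem (hcard ▸ hy)
    exact sortFun_injOn (T i0) (by rw [hcard]; exact hx) (by rw [hcard]; exact hy)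
      (hcol_injOn hab hone _ hx' _ hy' hxy)
  · intro j hj
    have hx : sortFun (T i0) j ∈ T i0 := sortFun_mem (hcard ▸ hj)
    have hsw : Equiv.swap a b (sortFun (T i0) j) ∈ T' i0 := by
      rw [hT', mem_image_swap, Equiv.swap_apply_self]
      exact hx
    obtain ⟨j', hj', hj'x⟩ := sortFun_surjOn hsw
    refine ⟨j', by rwa [hcard'] at hj', ?_⟩
    show hcol a b (sortFun (T' i0) j') = hcol a b (sortFun (T i0) j)
    rw [hj'x, hcol_swap hab]

end CollapseInv

lemma acyclic_no_loop {Q : FinQuiver n} (hQ : Q.Acyclic) (ar : Q.Arr) :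
    Q.hd ar ≠ Q.tl ar := by
  have := hQ 0 (fun _ => ar) (fun m => m.elim0)
  simpa using this

section CollapseNum
variable {i0 : Fin n} {a b : ℕ} {γ₁ γ₂ : Fin n → ℕ}

lemma rename_collapse_interactionNum (Q : FinQuiver n) (hQ : Q.Acyclic)
    (hab : a ≠ b) (ham : a < γ₁ i0 + γ₂ i0) (hbm : b < γ₁ i0 + γ₂ i0)
    (S : Fin n → Finset ℕ) :
    rename (collapseVar (i0, b) (i0, a)) (interactionNum Q γ₁ γ₂ S)
      = rename (collapseVar (i0, b) (i0, a)) (interactionNum Q γ₁ γ₂ (swapSh i0 a b S)) := by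
  rw [interactionNum, interactionNum, map_prod, map_prod]
  refine Finset.prod_congr rfl fun ar _ => ?_
  have hne := acyclic_no_loop hQ ar
  rw [arrowFactor, arrowFactor]
  simp only [map_prod, map_sub, MvPolynomial.rename_X]
  rcases eq_or_ne (Q.hd ar) i0 with hhd | hhd
  · have htl : Q.tl ar ≠ i0 := fun h => hne (hhd.trans h.symm)
    rw [hhd, swapSh_apply_ne S htl, swapSh_compl (γ₁ := γ₁) (γ₂ := γ₂) ham hbm S]
    simp only [collapse_at, collapse_off htl]
    exact (prod_image_swap hab (shuffleCompl γ₁ γ₂ S i0)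
      (fun x => ∏ j ∈ S (Q.tl ar), (X (i0, x) - X (Q.tl ar, j)))).symm
  · rw [swapSh_compl_ne S hhd]
    rcases eq_or_ne (Q.tl ar) i0 with htl | htl
    · rw [htl, swapSh_apply_i0]
      simp only [collapse_at, collapse_off hhd]
      refine Finset.prod_congr rfl fun j' _ => ?_
      exact (prod_image_swap hab (S i0)
        (fun x => X (Q.hd ar, j') - X (i0, x))).symm
    · rw [swapSh_apply_ne S htl]

end CollapseNum

section CollapseCofac
variable {i0 : Fin n} {a b : ℕ} {γ₁ γ₂ : Fin n → ℕ}

lemma swap_eq_a_iff (hab : a ≠ b) {x : ℕ} : Equiv.swap a b x = a ↔ x = b :=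
  ⟨fun h => Equiv.injective _ (h.trans (Equiv.swap_apply_right a b).symm),
   fun h => by rw [h, Equiv.swap_apply_right]⟩

lemma swap_eq_b_iff (hab : a ≠ b) {x : ℕ} : Equiv.swap a b x = b ↔ x = a :=
  ⟨fun h => Equiv.injective _ (h.trans (Equiv.swap_apply_left a b).symm),
   fun h => by rw [h, Equiv.swap_apply_left]⟩

lemma mem_image_prodSwap {A : Finset (ℕ × ℕ)} {q : ℕ × ℕ} :
    q ∈ A.image (Prod.map (Equiv.swap a b) (Equiv.swap a b))
      ↔ (Equiv.swap a b q.1, Equiv.swap a b q.2) ∈ A := by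
  constructor
  · intro h
    obtain ⟨⟨y1, y2⟩, hy, rfl⟩ := Finset.mem_image.1 h
    simpa [Prod.map, Equiv.swap_apply_self] using hy
  · intro h
    refine Finset.mem_image.2 ⟨(Equiv.swap a b q.1, Equiv.swap a b q.2), h, ?_⟩
    simp [Prod.map, Equiv.swap_apply_self]

lemma rename_collapse_cofacC (hab : a ≠ b)
    (ham : a < γ₁ i0 + γ₂ i0) (hbm : b < γ₁ i0 + γ₂ i0)
    {S : Fin n → Finset ℕ} (hS : S ∈ shuffles γ₁ γ₂) :
    rename (collapseVar (i0, b) (i0, a))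
        (∏ q ∈ (ordPairs (γ₁ i0 + γ₂ i0)
            \ (shuffleCompl γ₁ γ₂ S i0 ×ˢ S i0)).erase (a, b), vFactor i0 q)
      = rename (collapseVar (i0, b) (i0, a))
        (∏ q ∈ (ordPairs (γ₁ i0 + γ₂ i0)
            \ (shuffleCompl γ₁ γ₂ (swapSh i0 a b S) i0 ×ˢ swapSh i0 a b S i0)).erase (b, a),
          vFactor i0 q) := by
  have hset : (ordPairs (γ₁ i0 + γ₂ i0)
      \ (shuffleCompl γ₁ γ₂ (swapSh i0 a b S) i0 ×ˢ swapSh i0 a b S i0)).erase (b, a)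
      = ((ordPairs (γ₁ i0 + γ₂ i0)
          \ (shuffleCompl γ₁ γ₂ S i0 ×ˢ S i0)).erase (a, b)).image
            (Prod.map (Equiv.swap a b) (Equiv.swap a b)) := by
    ext ⟨x, y⟩
    rw [mem_image_prodSwap]
    simp only [Finset.mem_erase, Finset.mem_sdiff, mem_ordPairs, Finset.mem_product,
      swapSh_compl (γ₁ := γ₁) (γ₂ := γ₂) ham hbm S, swapSh_apply_i0, mem_image_swap,
      Prod.mk.injEq, ne_eq]
    constructor
    · rintro ⟨hne, ⟨hx, hy, hxy⟩, hp⟩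
      refine ⟨?_, ⟨?_, ?_, ?_⟩, hp⟩
      · intro ⟨h1, h2⟩
        exact hne ⟨(swap_eq_a_iff hab).1 h1, (swap_eq_b_iff hab).1 h2⟩
      · exact (swap_lt ham hbm x).2 hx
      · exact (swap_lt ham hbm y).2 hy
      · intro h
        exact hxy (Equiv.injective _ h)
    · rintro ⟨hne, ⟨hx, hy, hxy⟩, hp⟩
      refine ⟨?_, ⟨?_, ?_, ?_⟩, hp⟩
      · intro ⟨h1, h2⟩
        exact hne ⟨(swap_eq_a_iff hab).2 h1, (swap_eq_b_iff hab).2 h2⟩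
      · exact (swap_lt ham hbm x).1 hx
      · exact (swap_lt ham hbm y).1 hy
      · intro h
        exact hxy (by rw [h])
  rw [hset, map_prod, map_prod,
    Finset.prod_image (fun q _ q' _ h => by
      have h1 : Equiv.swap a b q.1 = Equiv.swap a b q'.1 := congrArg Prod.fst h
      have h2 : Equiv.swap a b q.2 = Equiv.swap a b q'.2 := congrArg Prod.snd h
      exact Prod.ext (Equiv.injective _ h1) (Equiv.injective _ h2))]
  refine Finset.prod_congr rfl fun q _ => ?_
  simp only [vFactor, map_sub, MvPolynomial.rename_X, Prod.map, collapse_at]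
  rw [hcol_swap hab, hcol_swap hab]

end CollapseCofac

section PairLemma
variable {i0 : Fin n} {a b : ℕ} {γ₁ γ₂ : Fin n → ℕ}

lemma mem_E {S : Fin n → Finset ℕ} {x y : ℕ} (hxy : x ≠ y)
    (hx : x < γ₁ i0 + γ₂ i0) (hy : y < γ₁ i0 + γ₂ i0)
    (hnot : ¬(x ∈ shuffleCompl γ₁ γ₂ S i0 ∧ y ∈ S i0)) :
    (x, y) ∈ ordPairs (γ₁ i0 + γ₂ i0) \ (shuffleCompl γ₁ γ₂ S i0 ×ˢ S i0) := by
  rw [Finset.mem_sdiff, Finset.mem_product]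
  exact ⟨mem_ordPairs.2 ⟨hx, hy, hxy⟩, hnot⟩

lemma not_mem_compl_of_mem {S : Fin n → Finset ℕ} {x : ℕ} (hx : x ∈ S i0) :
    x ∉ shuffleCompl γ₁ γ₂ S i0 := by
  rw [shuffleCompl, Finset.mem_sdiff]
  exact fun h => h.2 hx

lemma vFactor_swap_neg : vFactor i0 (b, a) = -vFactor i0 (a, b) := by
  simp only [vFactor]; ring

lemma sq_dvd_same (Q : FinQuiver n) (f₁ f₂ : PolyQ n) (hab : a ≠ b)
    (ham : a < γ₁ i0 + γ₂ i0) (hbm : b < γ₁ i0 + γ₂ i0)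
    {S : Fin n → Finset ℕ} (hiff : a ∈ S i0 ↔ b ∈ S i0) :
    vFactor i0 (a, b) ^ 2 ∣ numTerm Q γ₁ γ₂ f₁ f₂ S := by
  have hmem1 : (a, b) ∈ ordPairs (γ₁ i0 + γ₂ i0)
      \ (shuffleCompl γ₁ γ₂ S i0 ×ˢ S i0) := by
    refine mem_E hab ham hbm fun ⟨hac, hbs⟩ => ?_
    exact not_mem_compl_of_mem (hiff.2 hbs) hac
  have hmem2 : (b, a) ∈ (ordPairs (γ₁ i0 + γ₂ i0)
      \ (shuffleCompl γ₁ γ₂ S i0 ×ˢ S i0)).erase (a, b) := by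
    rw [Finset.mem_erase]
    refine ⟨by simp [Prod.ext_iff, hab.symm], ?_⟩
    refine mem_E hab.symm hbm ham fun ⟨hbc, has⟩ => ?_
    exact not_mem_compl_of_mem (hiff.1 has) hbc
  have h1 : cofac γ₁ γ₂ S = (∏ q ∈ ordPairs (γ₁ i0 + γ₂ i0)
      \ (shuffleCompl γ₁ γ₂ S i0 ×ˢ S i0), vFactor i0 q)
      * ∏ i ∈ Finset.univ.erase i0, ∏ q ∈ ordPairs (γ₁ i + γ₂ i)
          \ (shuffleCompl γ₁ γ₂ S i ×ˢ S i), vFactor i q := by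
    rw [cofac, ← Finset.mul_prod_erase Finset.univ _ (Finset.mem_univ i0)]
  have h2 : (∏ q ∈ ordPairs (γ₁ i0 + γ₂ i0)
      \ (shuffleCompl γ₁ γ₂ S i0 ×ˢ S i0), vFactor i0 q)
      = vFactor i0 (a, b) * (vFactor i0 (b, a)
        * ∏ q ∈ ((ordPairs (γ₁ i0 + γ₂ i0)
            \ (shuffleCompl γ₁ γ₂ S i0 ×ˢ S i0)).erase (a, b)).erase (b, a),
              vFactor i0 q) := by
    rw [Finset.mul_prod_erase _ _ hmem2, Finset.mul_prod_erase _ _ hmem1]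
  refine Dvd.dvd.mul_left ?_ _
  refine ⟨-((∏ q ∈ ((ordPairs (γ₁ i0 + γ₂ i0)
      \ (shuffleCompl γ₁ γ₂ S i0 ×ˢ S i0)).erase (a, b)).erase (b, a), vFactor i0 q)
      * ∏ i ∈ Finset.univ.erase i0, ∏ q ∈ ordPairs (γ₁ i + γ₂ i)
          \ (shuffleCompl γ₁ γ₂ S i ×ˢ S i), vFactor i q), ?_⟩
  rw [h1, h2, vFactor_swap_neg]
  ring

lemma sq_dvd_pair (Q : FinQuiver n) (hQ : Q.Acyclic) (f₁ f₂ : PolyQ n)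
    (h₁ : f₁ ∈ Hspace γ₁) (h₂ : f₂ ∈ Hspace γ₂) (hab : a ≠ b)
    (ham : a < γ₁ i0 + γ₂ i0) (hbm : b < γ₁ i0 + γ₂ i0)
    {S : Fin n → Finset ℕ} (hS : S ∈ shuffles γ₁ γ₂)
    (haS : a ∈ S i0) (hbS : b ∉ S i0) :
    vFactor i0 (a, b) ^ 2
      ∣ numTerm Q γ₁ γ₂ f₁ f₂ S + numTerm Q γ₁ γ₂ f₁ f₂ (swapSh i0 a b S) := by
  have hbS' : b ∈ swapSh i0 a b S i0 := by
    rw [swapSh_apply_i0, mem_image_swap, Equiv.swap_apply_right]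
    exact haS
  have hmem1 : (a, b) ∈ ordPairs (γ₁ i0 + γ₂ i0)
      \ (shuffleCompl γ₁ γ₂ S i0 ×ˢ S i0) :=
    mem_E hab ham hbm fun h => not_mem_compl_of_mem haS h.1
  have hmem2 : (b, a) ∈ ordPairs (γ₁ i0 + γ₂ i0)
      \ (shuffleCompl γ₁ γ₂ (swapSh i0 a b S) i0 ×ˢ swapSh i0 a b S i0) :=
    mem_E hab.symm hbm ham fun h => not_mem_compl_of_mem hbS' h.1
  -- abbreviations
  set w := collapseVar (i0, b) (i0, a) with hw
  set CS := ∏ q ∈ (ordPairs (γ₁ i0 + γ₂ i0)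
      \ (shuffleCompl γ₁ γ₂ S i0 ×ˢ S i0)).erase (a, b), vFactor i0 q with hCS
  set CS' := ∏ q ∈ (ordPairs (γ₁ i0 + γ₂ i0)
      \ (shuffleCompl γ₁ γ₂ (swapSh i0 a b S) i0 ×ˢ swapSh i0 a b S i0)).erase (b, a),
        vFactor i0 q with hCS'
  set RS := ∏ i ∈ Finset.univ.erase i0, ∏ q ∈ ordPairs (γ₁ i + γ₂ i)
      \ (shuffleCompl γ₁ γ₂ S i ×ˢ S i), vFactor i q with hRS
  have hcof1 : cofac γ₁ γ₂ S = vFactor i0 (a, b) * CS * RS := by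
    rw [cofac, ← Finset.mul_prod_erase Finset.univ _ (Finset.mem_univ i0),
      ← Finset.mul_prod_erase _ _ hmem1, hCS, hRS, mul_assoc]
  have hRS' : (∏ i ∈ Finset.univ.erase i0, ∏ q ∈ ordPairs (γ₁ i + γ₂ i)
      \ (shuffleCompl γ₁ γ₂ (swapSh i0 a b S) i ×ˢ swapSh i0 a b S i), vFactor i q) = RS := by
    rw [hRS]
    refine Finset.prod_congr rfl fun i hi => ?_
    have hi0 : i ≠ i0 := (Finset.mem_erase.1 hi).1
    rw [swapSh_compl_ne S hi0, swapSh_apply_ne S hi0]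
  have hcof2 : cofac γ₁ γ₂ (swapSh i0 a b S) = -(vFactor i0 (a, b)) * CS' * RS := by
    rw [cofac, ← Finset.mul_prod_erase Finset.univ _ (Finset.mem_univ i0),
      ← Finset.mul_prod_erase _ _ hmem2, hCS', hRS', ← vFactor_swap_neg, mul_assoc]
  have hsub1 : rename w (substAlong S f₁) = rename w (substAlong (swapSh i0 a b S) f₁) :=
    rename_collapse_substAlong h₁ hab S (swapSh i0 a b S) (mem_shuffles_iff.1 hS i0).2
      (swapSh_apply_i0 S) (fun i hi => swapSh_apply_ne S hi) (fun h => hbS h.2)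
  have hsub2 : rename w (substAlong (shuffleCompl γ₁ γ₂ S) f₂)
      = rename w (substAlong (shuffleCompl γ₁ γ₂ (swapSh i0 a b S)) f₂) :=
    rename_collapse_substAlong h₂ hab _ _ (card_shuffleCompl hS i0)
      (swapSh_compl ham hbm S) (fun i hi => swapSh_compl_ne S hi)
      (fun h => not_mem_compl_of_mem haS h.1)
  have hnum := rename_collapse_interactionNum (i0 := i0) Q hQ hab ham hbm S
  have hC := rename_collapse_cofacC (i0 := i0) hab ham hbm (S := S) hS
  have hdvd : vFactor i0 (a, b)
      ∣ (substAlong S f₁ * substAlong (shuffleCompl γ₁ γ₂ S) f₂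
          * interactionNum Q γ₁ γ₂ S * (CS * RS)
        - substAlong (swapSh i0 a b S) f₁
          * substAlong (shuffleCompl γ₁ γ₂ (swapSh i0 a b S)) f₂
          * interactionNum Q γ₁ γ₂ (swapSh i0 a b S) * (CS' * RS)) := by
    refine dvd_of_collapse_eq_zero (u := (i0, b)) (v := (i0, a)) ?_
    rw [map_sub, sub_eq_zero]
    simp only [map_mul]
    rw [← hw, hsub1, hsub2, hnum, hC]
  obtain ⟨g, hg⟩ := hdvd
  refine ⟨g, ?_⟩
  have hassoc : vFactor i0 (a, b) ^ 2 * g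
      = vFactor i0 (a, b) * (vFactor i0 (a, b) * g) := by ring
  rw [numTerm, numTerm, hcof1, hcof2, hassoc, ← hg]
  ring

end PairLemma

section SumDvd
variable {γ₁ γ₂ : Fin n → ℕ}

lemma sq_dvd_bigN (Q : FinQuiver n) (hQ : Q.Acyclic) (f₁ f₂ : PolyQ n)
    (h₁ : f₁ ∈ Hspace γ₁) (h₂ : f₂ ∈ Hspace γ₂) (i0 : Fin n) {q : ℕ × ℕ}
    (hq : q ∈ sortedPairs (γ₁ i0 + γ₂ i0)) :
    vFactor i0 q ^ 2 ∣ bigN Q γ₁ γ₂ f₁ f₂ := by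
  classical
  obtain ⟨a, b⟩ := q
  obtain ⟨ham, hbm, hab'⟩ := mem_sortedPairs.1 hq
  have hab : a ≠ b := Nat.ne_of_lt hab'
  rw [bigN, ← Finset.sum_filter_add_sum_filter_not (shuffles γ₁ γ₂)
    (fun S => a ∈ S i0 ↔ b ∈ S i0)]
  refine dvd_add (Finset.dvd_sum fun S hS => ?_) ?_
  · exact sq_dvd_same Q f₁ f₂ hab ham hbm (Finset.mem_filter.1 hS).2
  · set B := (shuffles γ₁ γ₂).filter (fun S => ¬(a ∈ S i0 ↔ b ∈ S i0)) with hB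
    have hBmem : ∀ S ∈ B, S ∈ shuffles γ₁ γ₂ ∧ ¬(a ∈ S i0 ↔ b ∈ S i0) := by
      intro S hS; exact Finset.mem_filter.1 hS
    rw [← Finset.sum_filter_add_sum_filter_not B (fun S => a ∈ S i0)]
    have hswap : ∑ S ∈ B.filter (fun S => ¬ a ∈ S i0), numTerm Q γ₁ γ₂ f₁ f₂ S
        = ∑ S ∈ B.filter (fun S => a ∈ S i0),
            numTerm Q γ₁ γ₂ f₁ f₂ (swapSh i0 a b S) := by
      refine Finset.sum_bij' (fun S _ => swapSh i0 a b S) (fun S _ => swapSh i0 a b S)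
        ?_ ?_ ?_ ?_ ?_
      · intro S hS
        rw [Finset.mem_filter] at hS ⊢
        obtain ⟨hS1, hS2⟩ := hS
        obtain ⟨hSs, hSne⟩ := hBmem S hS1
        have hbmem : b ∈ S i0 := by
          by_contra hbS
          exact hSne (iff_of_false hS2 hbS)
        have h1 : a ∈ swapSh i0 a b S i0 := by
          rw [swapSh_apply_i0, mem_image_swap, Equiv.swap_apply_left]; exact hbmem
        have h2 : b ∉ swapSh i0 a b S i0 := by
          rw [swapSh_apply_i0, mem_image_swap, Equiv.swap_apply_right]; exact hS2
        refine ⟨Finset.mem_filter.2 ⟨swapSh_mem_shuffles ham hbm hSs, ?_⟩, h1⟩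
        exact fun h => h2 (h.1 h1)
      · intro S hS
        rw [Finset.mem_filter] at hS ⊢
        obtain ⟨hS1, hS2⟩ := hS
        obtain ⟨hSs, hSne⟩ := hBmem S hS1
        have hbS : b ∉ S i0 := fun h => hSne (iff_of_true hS2 h)
        have h1 : a ∉ swapSh i0 a b S i0 := by
          rw [swapSh_apply_i0, mem_image_swap, Equiv.swap_apply_left]; exact hbS
        have h2 : b ∈ swapSh i0 a b S i0 := by
          rw [swapSh_apply_i0, mem_image_swap, Equiv.swap_apply_right]; exact hS2
        refine ⟨Finset.mem_filter.2 ⟨swapSh_mem_shuffles ham hbm hSs, ?_⟩, h1⟩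
        exact fun h => h1 (h.2 h2)
      · intro S _; exact swapSh_involutive S
      · intro S _; exact swapSh_involutive S
      · intro S _
        rw [swapSh_involutive]
    rw [hswap, ← Finset.sum_add_distrib]
    refine Finset.dvd_sum fun S hS => ?_
    rw [Finset.mem_filter] at hS
    obtain ⟨hS1, haS⟩ := hS
    obtain ⟨hSs, hSne⟩ := hBmem S hS1
    have hbS : b ∉ S i0 := fun h => hSne (iff_of_true haS h)
    exact sq_dvd_pair Q hQ f₁ f₂ h₁ h₂ hab ham hbm hSs haS hbS

lemma bigD_dvd_bigN (Q : FinQuiver n) (hQ : Q.Acyclic) (f₁ f₂ : PolyQ n)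
    (h₁ : f₁ ∈ Hspace γ₁) (h₂ : f₂ ∈ Hspace γ₂) :
    bigD (fun i => γ₁ i + γ₂ i) ∣ bigN Q γ₁ γ₂ f₁ f₂ :=
  bigD_dvd_of_squares fun i0 q hq => sq_dvd_bigN Q hQ f₁ f₂ h₁ h₂ i0 hq

end SumDvd

/-! #### Symmetry of the result -/

section PermSection
variable {γ₁ γ₂ : Fin n → ℕ} {i0 : Fin n} {σ : Equiv.Perm ℕ}

noncomputable def permSh (i0 : Fin n) (σ : Equiv.Perm ℕ) (S : Fin n → Finset ℕ) :
    Fin n → Finset ℕ :=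
  fun i => if i = i0 then (S i0).image σ else S i

lemma permSh_apply_i0 (S : Fin n → Finset ℕ) : permSh i0 σ S i0 = (S i0).image σ :=
  if_pos rfl

lemma permSh_apply_ne (S : Fin n → Finset ℕ) {i : Fin n} (h : i ≠ i0) :
    permSh i0 σ S i = S i := if_neg h

lemma perm_lt_iff {m : ℕ} (hσ : ∀ j, σ j ≠ j → j < m) {x : ℕ} : σ x < m ↔ x < m := by
  constructor
  · intro h
    by_contra hx
    have : σ x = x := by
      by_contra h2
      exact hx (hσ x h2)
    omega
  · intro hx
    by_contra h
    have h1 : σ (σ x) = σ x := by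
      by_contra h2
      exact h (hσ _ h2)
    have := σ.injective h1
    omega

lemma symm_support {m : ℕ} (hσ : ∀ j, σ j ≠ j → j < m) :
    ∀ j, σ.symm j ≠ j → j < m := by
  intro j hj
  have h2 : σ (σ.symm j) = j := σ.apply_symm_apply j
  have hne : σ (σ.symm j) ≠ σ.symm j := by
    rw [h2]
    exact fun h => hj h.symm
  have h3 : σ.symm j < m := hσ _ hne
  rw [← h2]
  exact (perm_lt_iff hσ).2 h3

lemma mem_image_perm {U : Finset ℕ} {x : ℕ} :
    x ∈ U.image σ ↔ σ.symm x ∈ U := by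
  constructor
  · intro h
    obtain ⟨y, hy, rfl⟩ := Finset.mem_image.1 h
    rwa [Equiv.symm_apply_apply]
  · intro h
    exact Finset.mem_image.2 ⟨_, h, σ.apply_symm_apply x⟩

lemma permSh_mem_shuffles (hσ : ∀ j, σ j ≠ j → j < γ₁ i0 + γ₂ i0)
    {S : Fin n → Finset ℕ} (hS : S ∈ shuffles γ₁ γ₂) :
    permSh i0 σ S ∈ shuffles γ₁ γ₂ := by
  rw [mem_shuffles_iff] at hS ⊢
  intro i
  by_cases h : i = i0
  · subst h
    rw [permSh_apply_i0]
    refine ⟨fun x hx => ?_, ?_⟩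
    · rw [mem_image_perm] at hx
      have h1 := (hS _).1 hx
      rw [Finset.mem_range] at h1 ⊢
      have h2 := (perm_lt_iff hσ).2 h1
      rwa [σ.apply_symm_apply] at h2
    · rw [Finset.card_image_of_injective _ σ.injective]
      exact (hS i).2
  · rw [permSh_apply_ne _ h]
    exact hS i

end PermSection

section PermSection2
variable {γ₁ γ₂ : Fin n → ℕ} {i0 : Fin n} {σ : Equiv.Perm ℕ}

lemma permSh_compl (hσ : ∀ j, σ j ≠ j → j < γ₁ i0 + γ₂ i0) (S : Fin n → Finset ℕ) :
    shuffleCompl γ₁ γ₂ (permSh i0 σ S) i0 = (shuffleCompl γ₁ γ₂ S i0).image σ := by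
  ext x
  rw [mem_image_perm, shuffleCompl, shuffleCompl, Finset.mem_sdiff, Finset.mem_sdiff,
    permSh_apply_i0, mem_image_perm, Finset.mem_range, Finset.mem_range]
  have : σ.symm x < γ₁ i0 + γ₂ i0 ↔ x < γ₁ i0 + γ₂ i0 := by
    constructor
    · intro h
      have h2 := (perm_lt_iff hσ).2 h
      rwa [σ.apply_symm_apply] at h2
    · intro h
      exact (perm_lt_iff (symm_support hσ)).2 h
  rw [this]

lemma permSh_compl_ne (S : Fin n → Finset ℕ) {i : Fin n} (h : i ≠ i0) :
    shuffleCompl γ₁ γ₂ (permSh i0 σ S) i = shuffleCompl γ₁ γ₂ S i := by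
  rw [shuffleCompl, shuffleCompl, permSh_apply_ne _ h]

lemma permSh_inv (S : Fin n → Finset ℕ) : permSh i0 σ.symm (permSh i0 σ S) = S := by
  funext i
  by_cases h : i = i0
  · subst h
    rw [permSh_apply_i0, permSh_apply_i0, Finset.image_image]
    have : (⇑σ.symm ∘ ⇑σ) = id := by
      funext x
      exact σ.symm_apply_apply x
    rw [this, Finset.image_id]
  · rw [permSh_apply_ne _ h, permSh_apply_ne _ h]

lemma permSh_inv' (S : Fin n → Finset ℕ) : permSh i0 σ (permSh i0 σ.symm S) = S := by
  funext i
  by_cases h : i = i0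
  · subst h
    rw [permSh_apply_i0, permSh_apply_i0, Finset.image_image]
    have : (⇑σ ∘ ⇑σ.symm) = id := by
      funext x
      exact σ.apply_symm_apply x
    rw [this, Finset.image_id]
  · rw [permSh_apply_ne _ h, permSh_apply_ne _ h]

lemma prod_image_perm (U : Finset ℕ) (F : ℕ → PolyQ n) :
    ∏ x ∈ U.image σ, F x = ∏ x ∈ U, F (σ x) :=
  Finset.prod_image (fun x _ y _ h => σ.injective h)

lemma rename_vertexPerm_substAlong {γ : Fin n → ℕ} {f : PolyQ n} (hf : f ∈ Hspace γ)
    (T : Fin n → Finset ℕ) (hcard : (T i0).card = γ i0) :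
    rename (vertexPerm i0 σ) (substAlong T f) = substAlong (permSh i0 σ T) f := by
  rw [substAlong_eq_rename, substAlong_eq_rename, MvPolynomial.rename_rename]
  refine rename_eq_of_images hf i0
    (e := fun j => σ (sortFun (T i0) j))
    (e' := fun j => sortFun (permSh i0 σ T i0) j)
    (fun j => ?_) (fun j => rfl) (fun p hp => ?_) ?_ ?_
  · show vertexPerm i0 σ (i0, sortFun (T i0) j) = _
    exact vertexPerm_apply_eq σ _
  · obtain ⟨v, x⟩ := p
    show vertexPerm i0 σ (v, sortFun (T v) x) = (v, sortFun (permSh i0 σ T v) x)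
    rw [vertexPerm_apply_ne' σ hp, permSh_apply_ne _ hp]
  · intro x hx y hy hxy
    rw [Set.mem_Iio] at hx hy
    exact sortFun_injOn (T i0) (by rw [hcard]; exact hx) (by rw [hcard]; exact hy)
      (σ.injective hxy)
  · intro j hj
    have hx : sortFun (T i0) j ∈ T i0 := sortFun_mem (hcard ▸ hj)
    have hmem : σ (sortFun (T i0) j) ∈ permSh i0 σ T i0 := by
      rw [permSh_apply_i0]
      exact Finset.mem_image.2 ⟨_, hx, rfl⟩
    obtain ⟨j', hj', hj'x⟩ := sortFun_surjOn hmem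
    have hcard' : (permSh i0 σ T i0).card = γ i0 := by
      rw [permSh_apply_i0, Finset.card_image_of_injective _ σ.injective, hcard]
    exact ⟨j', by rwa [hcard'] at hj', hj'x⟩

lemma rename_vertexPerm_interactionNum (Q : FinQuiver n) (hσ : ∀ j, σ j ≠ j → j < γ₁ i0 + γ₂ i0)
    (S : Fin n → Finset ℕ) :
    rename (vertexPerm i0 σ) (interactionNum Q γ₁ γ₂ S)
      = interactionNum Q γ₁ γ₂ (permSh i0 σ S) := by
  rw [interactionNum, interactionNum, map_prod]
  refine Finset.prod_congr rfl fun ar _ => ?_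
  rw [arrowFactor, arrowFactor]
  simp only [map_prod, map_sub, MvPolynomial.rename_X]
  rcases eq_or_ne (Q.hd ar) i0 with hhd | hhd <;> rcases eq_or_ne (Q.tl ar) i0 with htl | htl
  · rw [hhd, htl, permSh_compl (γ₁ := γ₁) (γ₂ := γ₂) hσ S, permSh_apply_i0,
      prod_image_perm]
    refine Finset.prod_congr rfl fun j' _ => ?_
    rw [prod_image_perm]
    refine Finset.prod_congr rfl fun j _ => ?_
    rw [vertexPerm_apply_eq, vertexPerm_apply_eq]
  · rw [hhd, permSh_compl (γ₁ := γ₁) (γ₂ := γ₂) hσ S, permSh_apply_ne S htl, prod_image_perm]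
    refine Finset.prod_congr rfl fun j' _ => ?_
    refine Finset.prod_congr rfl fun j _ => ?_
    rw [vertexPerm_apply_eq, vertexPerm_apply_ne' σ htl]
  · rw [htl, permSh_compl_ne S hhd, permSh_apply_i0]
    refine Finset.prod_congr rfl fun j' _ => ?_
    rw [prod_image_perm]
    refine Finset.prod_congr rfl fun j _ => ?_
    rw [vertexPerm_apply_ne' σ hhd, vertexPerm_apply_eq]
  · rw [permSh_compl_ne S hhd, permSh_apply_ne S htl]
    refine Finset.prod_congr rfl fun j' _ => ?_
    refine Finset.prod_congr rfl fun j _ => ?_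
    rw [vertexPerm_apply_ne' σ hhd, vertexPerm_apply_ne' σ htl]

lemma mem_image_prodPerm {A : Finset (ℕ × ℕ)} {q : ℕ × ℕ} :
    q ∈ A.image (Prod.map ⇑σ ⇑σ) ↔ (σ.symm q.1, σ.symm q.2) ∈ A := by
  constructor
  · intro h
    obtain ⟨⟨y1, y2⟩, hy, rfl⟩ := Finset.mem_image.1 h
    simpa [Prod.map, σ.symm_apply_apply] using hy
  · intro h
    refine Finset.mem_image.2 ⟨(σ.symm q.1, σ.symm q.2), h, ?_⟩
    simp [Prod.map, σ.apply_symm_apply]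

lemma symm_lt_iff (hσ : ∀ j, σ j ≠ j → j < γ₁ i0 + γ₂ i0) {x : ℕ} :
    σ.symm x < γ₁ i0 + γ₂ i0 ↔ x < γ₁ i0 + γ₂ i0 := by
  constructor
  · intro h
    have h2 := (perm_lt_iff hσ).2 h
    rwa [σ.apply_symm_apply] at h2
  · intro h
    exact (perm_lt_iff (symm_support hσ)).2 h

lemma rename_vertexPerm_cofac (hσ : ∀ j, σ j ≠ j → j < γ₁ i0 + γ₂ i0)
    (S : Fin n → Finset ℕ) :
    rename (vertexPerm i0 σ) (cofac γ₁ γ₂ S) = cofac γ₁ γ₂ (permSh i0 σ S) := by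
  rw [cofac, cofac, map_prod]
  refine Finset.prod_congr rfl fun i _ => ?_
  rw [map_prod]
  rcases eq_or_ne i i0 with rfl | hi
  · have hset : ordPairs (γ₁ i + γ₂ i)
        \ (shuffleCompl γ₁ γ₂ (permSh i σ S) i ×ˢ permSh i σ S i)
        = (ordPairs (γ₁ i + γ₂ i) \ (shuffleCompl γ₁ γ₂ S i ×ˢ S i)).image
            (Prod.map ⇑σ ⇑σ) := by
      ext ⟨x, y⟩
      rw [mem_image_prodPerm]
      simp only [Finset.mem_sdiff, mem_ordPairs, Finset.mem_product,
        permSh_compl (γ₁ := γ₁) (γ₂ := γ₂) hσ S, permSh_apply_i0, mem_image_perm]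
      constructor
      · rintro ⟨⟨hx, hy, hxy⟩, hp⟩
        refine ⟨⟨?_, ?_, ?_⟩, hp⟩
        · exact (symm_lt_iff (γ₁ := γ₁) (γ₂ := γ₂) hσ).2 hx
        · exact (symm_lt_iff (γ₁ := γ₁) (γ₂ := γ₂) hσ).2 hy
        · exact fun h => hxy (σ.symm.injective h)
      · rintro ⟨⟨hx, hy, hxy⟩, hp⟩
        refine ⟨⟨?_, ?_, ?_⟩, hp⟩
        · exact (symm_lt_iff (γ₁ := γ₁) (γ₂ := γ₂) hσ).1 hx
        · exact (symm_lt_iff (γ₁ := γ₁) (γ₂ := γ₂) hσ).1 hy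
        · intro h
          exact hxy (by rw [h])
    rw [hset, Finset.prod_image (fun q _ q' _ h => by
      have h1 : σ q.1 = σ q'.1 := congrArg Prod.fst h
      have h2 : σ q.2 = σ q'.2 := congrArg Prod.snd h
      exact Prod.ext (σ.injective h1) (σ.injective h2))]
    refine Finset.prod_congr rfl fun q _ => ?_
    simp only [vFactor, map_sub, MvPolynomial.rename_X, Prod.map, vertexPerm_apply_eq]
  · rw [permSh_compl_ne S hi, permSh_apply_ne S hi]
    refine Finset.prod_congr rfl fun q _ => ?_
    simp only [vFactor, map_sub, MvPolynomial.rename_X, vertexPerm_apply_ne' σ hi]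

lemma rename_vertexPerm_bigD (hσ : ∀ j, σ j ≠ j → j < γ₁ i0 + γ₂ i0) :
    rename (vertexPerm i0 σ) (bigD (fun i => γ₁ i + γ₂ i))
      = bigD (fun i => γ₁ i + γ₂ i) := by
  rw [bigD, map_prod]
  refine Finset.prod_congr rfl fun i _ => ?_
  rw [map_prod]
  rcases eq_or_ne i i0 with rfl | hi
  · have hset : ordPairs (γ₁ i + γ₂ i)
        = (ordPairs (γ₁ i + γ₂ i)).image (Prod.map ⇑σ ⇑σ) := by
      ext ⟨x, y⟩
      rw [mem_image_prodPerm]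
      simp only [mem_ordPairs]
      constructor
      · rintro ⟨hx, hy, hxy⟩
        exact ⟨(symm_lt_iff (γ₁ := γ₁) (γ₂ := γ₂) hσ).2 hx,
          (symm_lt_iff (γ₁ := γ₁) (γ₂ := γ₂) hσ).2 hy,
          fun h => hxy (σ.symm.injective h)⟩
      · rintro ⟨hx, hy, hxy⟩
        exact ⟨(symm_lt_iff (γ₁ := γ₁) (γ₂ := γ₂) hσ).1 hx,
          (symm_lt_iff (γ₁ := γ₁) (γ₂ := γ₂) hσ).1 hy,
          fun h => hxy (by rw [h])⟩
    conv_rhs => rw [hset]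
    rw [Finset.prod_image (fun q _ q' _ h => by
      have h1 : σ q.1 = σ q'.1 := congrArg Prod.fst h
      have h2 : σ q.2 = σ q'.2 := congrArg Prod.snd h
      exact Prod.ext (σ.injective h1) (σ.injective h2))]
    refine Finset.prod_congr rfl fun q _ => ?_
    simp only [vFactor, map_sub, MvPolynomial.rename_X, Prod.map, vertexPerm_apply_eq]
  · refine Finset.prod_congr rfl fun q _ => ?_
    simp only [vFactor, map_sub, MvPolynomial.rename_X, vertexPerm_apply_ne' σ hi]

lemma rename_vertexPerm_bigN (Q : FinQuiver n) (f₁ f₂ : PolyQ n)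
    (h₁ : f₁ ∈ Hspace γ₁) (h₂ : f₂ ∈ Hspace γ₂)
    (hσ : ∀ j, σ j ≠ j → j < γ₁ i0 + γ₂ i0) :
    rename (vertexPerm i0 σ) (bigN Q γ₁ γ₂ f₁ f₂) = bigN Q γ₁ γ₂ f₁ f₂ := by
  rw [bigN, map_sum]
  have hterm : ∀ S ∈ shuffles γ₁ γ₂,
      rename (vertexPerm i0 σ) (numTerm Q γ₁ γ₂ f₁ f₂ S)
        = numTerm Q γ₁ γ₂ f₁ f₂ (permSh i0 σ S) := by
    intro S hS
    rw [numTerm, numTerm, map_mul, map_mul, map_mul]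
    rw [rename_vertexPerm_substAlong h₁ S (mem_shuffles_iff.1 hS i0).2,
      rename_vertexPerm_substAlong h₂ (shuffleCompl γ₁ γ₂ S) (card_shuffleCompl hS i0),
      rename_vertexPerm_interactionNum Q hσ S, rename_vertexPerm_cofac hσ S]
    have hc : permSh i0 σ (shuffleCompl γ₁ γ₂ S) = shuffleCompl γ₁ γ₂ (permSh i0 σ S) := by
      funext i
      rcases eq_or_ne i i0 with rfl | hi
      · rw [permSh_apply_i0, permSh_compl (γ₁ := γ₁) (γ₂ := γ₂) hσ S]
      · rw [permSh_apply_ne _ hi, permSh_compl_ne S hi]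
    rw [hc]
  rw [Finset.sum_congr rfl hterm]
  refine Finset.sum_bij' (fun S _ => permSh i0 σ S) (fun S _ => permSh i0 σ.symm S)
    ?_ ?_ ?_ ?_ ?_
  · intro S hS
    exact permSh_mem_shuffles hσ hS
  · intro S hS
    exact permSh_mem_shuffles (symm_support hσ) hS
  · intro S _
    exact permSh_inv S
  · intro S _
    exact permSh_inv' S
  · intro S _
    rfl

end PermSection2

/-! #### Variable bounds -/

section VarsSection
variable {γ₁ γ₂ : Fin n → ℕ}

noncomputable def kproj (γ : Fin n → ℕ) : PolyQ n →ₐ[ℚ] PolyQ n :=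
  aeval fun q : Fin n × ℕ => if q.2 < γ q.1 then (X q : PolyQ n) else 0

lemma kproj_X {γ : Fin n → ℕ} {q : Fin n × ℕ} (h : q.2 < γ q.1) :
    kproj γ (X q) = X q := by rw [kproj, aeval_X, if_pos h]

lemma kproj_vars (γ : Fin n → ℕ) (f : PolyQ n) :
    ∀ p ∈ (kproj γ f).vars, p.2 < γ p.1 := by
  induction f using MvPolynomial.induction_on with
  | C c =>
      intro p hp
      rw [kproj, aeval_C] at hp
      have : (algebraMap ℚ (PolyQ n) c) = C c := rfl
      rw [this, MvPolynomial.vars_C] at hp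
      exact absurd hp (Finset.notMem_empty p)
  | add f g hf hg =>
      intro p hp
      rw [map_add] at hp
      rcases Finset.mem_union.1 (MvPolynomial.vars_add_subset _ _ hp) with h | h
      exacts [hf p h, hg p h]
  | mul_X f q hf =>
      intro p hp
      rw [map_mul] at hp
      by_cases hq : q.2 < γ q.1
      · rw [kproj_X hq] at hp
        rcases Finset.mem_union.1 (MvPolynomial.vars_mul _ _ hp) with h | h
        · exact hf p h
        · rw [MvPolynomial.vars_X] at h
          rw [Finset.mem_singleton.1 h]
          exact hq
      · have h0 : kproj γ (X q) = 0 := by rw [kproj, aeval_X, if_neg hq]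
        rw [h0, mul_zero, MvPolynomial.vars_0] at hp
        exact absurd hp (Finset.notMem_empty p)

lemma kproj_eq_self {γ : Fin n → ℕ} {f : PolyQ n} (hv : ∀ p ∈ f.vars, p.2 < γ p.1) :
    kproj γ f = f := by
  have h : (kproj γ).toRingHom f = (aeval (R := ℚ) X).toRingHom f := by
    refine MvPolynomial.hom_congr_vars ?_ ?_ rfl
    · ext c : 2
      simp [kproj]
    · intro p hp _
      have := hv p hp
      simp only [AlgHom.toRingHom_eq_coe, RingHom.coe_coe]
      rw [kproj_X this, aeval_X]
  simpa [MvPolynomial.aeval_X_left_apply] using h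

lemma substAlong_vars {γ : Fin n → ℕ} {f : PolyQ n} (hv : ∀ p ∈ f.vars, p.2 < γ p.1)
    {T : Fin n → Finset ℕ} (hcard : ∀ i, γ i ≤ (T i).card)
    (hsub : ∀ i, T i ⊆ Finset.range (γ₁ i + γ₂ i)) :
    ∀ p ∈ (substAlong T f).vars, p.2 < γ₁ p.1 + γ₂ p.1 := by
  intro p hp
  rw [substAlong_eq_rename] at hp
  have := MvPolynomial.vars_rename _ f hp
  obtain ⟨p0, hp0, rfl⟩ := Finset.mem_image.1 this
  have h1 : p0.2 < (T p0.1).card := lt_of_lt_of_le (hv p0 hp0) (hcard p0.1)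
  have h2 : sortFun (T p0.1) p0.2 ∈ T p0.1 := sortFun_mem h1
  have := hsub p0.1 h2
  rwa [Finset.mem_range] at this

lemma shuffle_subset {S : Fin n → Finset ℕ} (hS : S ∈ shuffles γ₁ γ₂) (i : Fin n) :
    S i ⊆ Finset.range (γ₁ i + γ₂ i) := (mem_shuffles_iff.1 hS i).1

lemma compl_subset (S : Fin n → Finset ℕ) (i : Fin n) :
    shuffleCompl γ₁ γ₂ S i ⊆ Finset.range (γ₁ i + γ₂ i) := by
  intro x hx
  rw [shuffleCompl, Finset.mem_sdiff] at hx
  exact hx.1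

lemma kproj_bigN (Q : FinQuiver n) (f₁ f₂ : PolyQ n)
    (h₁ : f₁ ∈ Hspace γ₁) (h₂ : f₂ ∈ Hspace γ₂) :
    kproj (fun i => γ₁ i + γ₂ i) (bigN Q γ₁ γ₂ f₁ f₂) = bigN Q γ₁ γ₂ f₁ f₂ := by
  rw [bigN, map_sum]
  refine Finset.sum_congr rfl fun S hS => ?_
  rw [numTerm, map_mul, map_mul, map_mul]
  have hc1 : kproj (fun i => γ₁ i + γ₂ i) (substAlong S f₁) = substAlong S f₁ :=
    kproj_eq_self (substAlong_vars h₁.1 (fun i => le_of_eq (mem_shuffles_iff.1 hS i).2.symm)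
      (shuffle_subset hS))
  have hc2 : kproj (fun i => γ₁ i + γ₂ i) (substAlong (shuffleCompl γ₁ γ₂ S) f₂)
      = substAlong (shuffleCompl γ₁ γ₂ S) f₂ :=
    kproj_eq_self (substAlong_vars h₂.1 (fun i => le_of_eq (card_shuffleCompl hS i).symm)
      (compl_subset S))
  have hc3 : kproj (fun i => γ₁ i + γ₂ i) (interactionNum Q γ₁ γ₂ S)
      = interactionNum Q γ₁ γ₂ S := by
    rw [interactionNum, map_prod]
    refine Finset.prod_congr rfl fun ar _ => ?_
    rw [arrowFactor]
    simp only [map_prod, map_sub]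
    refine Finset.prod_congr rfl fun j' hj' => ?_
    refine Finset.prod_congr rfl fun j hj => ?_
    rw [kproj_X, kproj_X]
    · have := shuffle_subset hS (Q.tl ar) hj
      rwa [Finset.mem_range] at this
    · have := compl_subset S (Q.hd ar) hj'
      rwa [Finset.mem_range] at this
  have hc4 : kproj (fun i => γ₁ i + γ₂ i) (cofac γ₁ γ₂ S) = cofac γ₁ γ₂ S := by
    rw [cofac]
    simp only [map_prod]
    refine Finset.prod_congr rfl fun i _ => ?_
    refine Finset.prod_congr rfl fun q hq => ?_
    have hq' : q ∈ ordPairs (γ₁ i + γ₂ i) := (Finset.mem_sdiff.1 hq).1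
    obtain ⟨hq1, hq2, _⟩ := mem_ordPairs.1 hq'
    rw [vFactor, map_sub, kproj_X hq1, kproj_X hq2]
  rw [hc1, hc2, hc3, hc4]

lemma kproj_bigD :
    kproj (fun i => γ₁ i + γ₂ i) (bigD (fun i : Fin n => γ₁ i + γ₂ i))
      = bigD (fun i => γ₁ i + γ₂ i) := by
  rw [bigD]
  simp only [map_prod]
  refine Finset.prod_congr rfl fun i _ => ?_
  refine Finset.prod_congr rfl fun q hq => ?_
  obtain ⟨hq1, hq2, _⟩ := mem_ordPairs.1 hq
  rw [vFactor, map_sub, kproj_X hq1, kproj_X hq2]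

end VarsSection

end CoHAProof


/-- For `f₁ ∈ ℋ_{γ₁}` and `f₂ ∈ ℋ_{γ₂}` over an acyclic quiver, the
Kontsevich–Soibelman localization sum is a polynomial, symmetric at each vertex, i.e.
the CoHA product `f₁ * f₂` is a genuine polynomial lying in `ℋ_{γ₁+γ₂}`. -/
theorem coha_mul_is_polynomial {n : ℕ} (Q : FinQuiver n) (hQ : Q.Acyclic)
    (γ₁ γ₂ : Fin n → ℕ) (f₁ f₂ : PolyQ n)
    (h₁ : f₁ ∈ Hspace γ₁) (h₂ : f₂ ∈ Hspace γ₂) :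
    algebraMap (PolyQ n) (FractionRing (PolyQ n)) (cohaMul Q γ₁ γ₂ f₁ f₂) =
        cohaMulRat Q γ₁ γ₂ f₁ f₂ ∧
      cohaMul Q γ₁ γ₂ f₁ f₂ ∈ Hspace (fun i => γ₁ i + γ₂ i) := by
  classical
  obtain ⟨P, hP⟩ := bigD_dvd_bigN Q hQ f₁ f₂ h₁ h₂
  have hD0 : bigD (fun i : Fin n => γ₁ i + γ₂ i) ≠ 0 := bigD_ne_zero _
  have hD0' : algebraMap (PolyQ n) (FractionRing (PolyQ n))
      (bigD (fun i : Fin n => γ₁ i + γ₂ i)) ≠ 0 := by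
    rw [map_ne_zero_iff _ (IsFractionRing.injective (PolyQ n) (FractionRing (PolyQ n)))]
    exact hD0
  have hrat : cohaMulRat Q γ₁ γ₂ f₁ f₂
      = algebraMap (PolyQ n) (FractionRing (PolyQ n)) P := by
    rw [cohaMulRat_eq_div, hP, map_mul, mul_div_cancel_left₀ _ hD0']
  have hPmem : P ∈ Hspace (fun i => γ₁ i + γ₂ i) := by
    rw [mem_Hspace_iff]
    constructor
    · have hfix : kproj (fun i => γ₁ i + γ₂ i) P = P := by
        have hk := kproj_bigN Q f₁ f₂ h₁ h₂
        rw [hP, map_mul, kproj_bigD] at hk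
        exact mul_left_cancel₀ hD0 hk
      intro p hp
      rw [← hfix] at hp
      exact kproj_vars _ P p hp
    · intro i σ hσ
      have hk := rename_vertexPerm_bigN Q f₁ f₂ h₁ h₂ (i0 := i) (σ := σ) hσ
      rw [hP, map_mul, rename_vertexPerm_bigD hσ] at hk
      exact mul_left_cancel₀ hD0 hk
  have hex : ∃ P' : PolyQ n, algebraMap (PolyQ n) (FractionRing (PolyQ n)) P'
      = cohaMulRat Q γ₁ γ₂ f₁ f₂ := ⟨P, hrat.symm⟩
  rw [cohaMul, dif_pos hex]
  refine ⟨hex.choose_spec, ?_⟩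
  have hch : hex.choose = P := by
    apply IsFractionRing.injective (PolyQ n) (FractionRing (PolyQ n))
    rw [hex.choose_spec, hrat]
  rw [hch]
  exact hPmem
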